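/- arXiv:1210.6952 — 5 statements merged into one kernel-verified Lean document; each statement's English description precedes it below -/
import Mathlib

section
/- Let (a_n)_{n≥1} be a sequence of real numbers such that c := limsup_{n→∞} a_n/n < +∞. Then there is a sequence (b_n)_{n≥1} of positive real numbers with lim_{n→∞} b_n/b_{n+1} = 1 such that the series Σ_{n=1}^{∞} b_n exp(a_n − ns) converges for every s > c and diverges (equals +∞) for every s ≤ c. -/
open MeasureTheory Filter Set Topology ENNReal NNReal

noncomputable section

/-- Birkhoff sum `S_n(φ) = ∑_{j=0}^{n-1} φ ∘ f^j`. -/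
def Sn (f φ : ℝ → ℝ) (n : ℕ) (x : ℝ) : ℝ := ∑ j ∈ Finset.range n, φ (f^[j] x)

/-- Entropy of the join, along the orbit up to time `n`, of the finite measurable
partition of the space induced by a map `P` into `Fin k`. -/
def partEntropy {Y : Type*} [MeasurableSpace Y] (ν : Measure Y) (T : Y → Y)
    {k : ℕ} (P : Y → Fin k) (n : ℕ) : ℝ :=
  ∑ s : Fin n → Fin k,
    Real.negMulLog ((ν {y | ∀ i : Fin n, P (T^[(i : ℕ)] y) = s i}).toReal)

/-- Measure-theoretic (Kolmogorov–Sinai) entropy `h_ν(T)`. -/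
def ksEntropy {Y : Type*} [MeasurableSpace Y] (ν : Measure Y) (T : Y → Y) : ℝ :=
  ⨆ k : ℕ, ⨆ P : {P : Y → Fin k // Measurable P},
    Filter.liminf (fun n : ℕ => partEntropy ν T P.1 n / n) atTop

/-- `ν` is invariant by `T`. -/
def InvariantMeas {Y : Type*} [MeasurableSpace Y] (T : Y → Y) (ν : Measure Y) : Prop :=
  ∀ A : Set Y, MeasurableSet A → ν (T ⁻¹' A) = ν A

/-- Topological pressure of `f|_X` for the potential `φ`, defined by the variational
principle over invariant Borel probability measures carried by `X`. -/
def pres (f : ℝ → ℝ) (X : Set ℝ) (φ : ℝ → ℝ) : ℝ :=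
  sSup { r : ℝ | ∃ ν : Measure ℝ, IsProbabilityMeasure ν ∧ InvariantMeas f ν ∧ ν X = 1 ∧
    r = ksEntropy ν f + ∫ x in X, φ x ∂ν }

/-- Topological pressure of a continuous self-map of a compact metric space,
defined by the variational principle. -/
def presGen {Y : Type*} [MeasurableSpace Y] (T : Y → Y) (φ : Y → ℝ) : ℝ :=
  sSup { r : ℝ | ∃ ν : Measure Y, IsProbabilityMeasure ν ∧ InvariantMeas T ν ∧
    r = ksEntropy ν T + ∫ y, φ y ∂ν }

/-- `ν` is an equilibrium state of `f|_X` for the potential `φ`. -/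
def IsEquilibriumState (f : ℝ → ℝ) (X : Set ℝ) (φ : ℝ → ℝ) (ν : Measure ℝ) : Prop :=
  IsProbabilityMeasure ν ∧ InvariantMeas f ν ∧ ν X = 1 ∧
    ksEntropy ν f + ∫ x in X, φ x ∂ν = pres f X φ

/-- The Julia set of `f : I → I`: the complement in `I` of the largest open set on which
the family of iterates of `f` is normal (equicontinuous). -/
def juliaSet (f : ℝ → ℝ) (I : Set ℝ) : Set ℝ :=
  I \ ⋃₀ {U : Set ℝ | IsOpen U ∧ EquicontinuousOn (fun n : ℕ => f^[n]) (U ∩ I)}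

/-- `f : I → I` is a multimodal interval map. -/
structure IsMultimodal (f : ℝ → ℝ) (I : Set ℝ) : Prop where
  interval : ∃ a b : ℝ, a ≤ b ∧ I = Icc a b
  mapsTo : MapsTo f I I
  contOn : ContinuousOn f I
  not_injOn : ¬ InjOn f I
  piecewise : ∃ (n : ℕ) (P : Fin n → Set ℝ), (∀ i, (P i).OrdConnected) ∧
    Pairwise (Function.onFun Disjoint P) ∧ (⋃ i, P i) = I ∧ ∀ i, InjOn f (P i)

/-- The class `𝒜` of interval maps. -/
structure InClassA (f : ℝ → ℝ) (I : Set ℝ) : Prop extends IsMultimodal f I where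
  differentiable : ∀ x ∈ I, DifferentiableAt ℝ f x
  deriv_holder : ∃ β ∈ Ioc (0:ℝ) 1, ∃ C : ℝ, 0 ≤ C ∧
    ∀ x ∈ I, ∀ y ∈ I, |deriv f x - deriv f y| ≤ C * |x - y| ^ β
  crit_finite : {x | x ∈ I ∧ deriv f x = 0}.Finite
  julia_nontrivial : ∃ x ∈ juliaSet f I, ∃ y ∈ juliaSet f I, x ≠ y
  julia_inv : I ∩ f ⁻¹' juliaSet f I = juliaSet f I

/-- `φ` is Hölder continuous of exponent `α` on `X`. -/
def HolderOnSet (φ : ℝ → ℝ) (X : Set ℝ) (α : ℝ) : Prop :=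
  ∃ C : ℝ, 0 ≤ C ∧ ∀ x ∈ X, ∀ y ∈ X, |φ x - φ y| ≤ C * |x - y| ^ α

/-- `φ` is Hölder continuous on `X` (for some exponent `α ∈ (0,1]`). -/
def HolderCont (φ : ℝ → ℝ) (X : Set ℝ) : Prop :=
  ∃ α ∈ Ioc (0:ℝ) 1, HolderOnSet φ X α

/-- A complex-valued function Hölder continuous of exponent `α` on `X`. -/
def HolderOnSetC (ψ : ℝ → ℂ) (X : Set ℝ) (α : ℝ) : Prop :=
  ∃ C : ℝ, 0 ≤ C ∧ ∀ x ∈ X, ∀ y ∈ X, ‖ψ x - ψ y‖ ≤ C * |x - y| ^ α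

/-- The potential `φ` is hyperbolic for `f` on `X`:
for some `n ≥ 1`, `sup_X (1/n) S_n(φ) < P(f|_X, φ)`. -/
def IsHyperbolicPotential (f φ : ℝ → ℝ) (X : Set ℝ) : Prop :=
  ∃ n : ℕ, 0 < n ∧ sSup ((fun x => Sn f φ n x / n) '' X) < pres f X φ

/-- `f` is topologically exact on `X`. -/
def TopExactOn (f : ℝ → ℝ) (X : Set ℝ) : Prop :=
  ∀ U : Set ℝ, IsOpen U → (U ∩ X).Nonempty → ∃ n : ℕ, 0 < n ∧ f^[n] '' (U ∩ X) = X

/-- `μ` is a `g`-conformal measure for `f` on `X`: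
`μ(f(A)) = ∫_A g dμ` for every Borel `A ⊆ X` on which `f` is injective. -/
def IsConformal (f : ℝ → ℝ) (X : Set ℝ) (g : ℝ → ℝ) (μ : Measure ℝ) : Prop :=
  ∀ A : Set ℝ, MeasurableSet A → A ⊆ X → InjOn f A →
    μ (f '' A) = ∫⁻ x in A, ENNReal.ofReal (g x) ∂μ

/-- Topological support of a measure on `ℝ`. -/
def measSupport (μ : Measure ℝ) : Set ℝ := {x | ∀ ε > 0, 0 < μ (Metric.ball x ε)}

/-- The transfer (Ruelle–Perron–Frobenius) operator `L_φ` acting on real functions. -/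
def transfer (f φ : ℝ → ℝ) (X : Set ℝ) (ψ : ℝ → ℝ) (x : ℝ) : ℝ :=
  ∑ᶠ y ∈ X ∩ f ⁻¹' {x}, Real.exp (φ y) * ψ y

/-- The transfer operator `L_φ` acting on complex functions. -/
def transferC (f φ : ℝ → ℝ) (X : Set ℝ) (ψ : ℝ → ℂ) (x : ℝ) : ℂ :=
  ∑ᶠ y ∈ X ∩ f ⁻¹' {x}, (Real.exp (φ y) : ℂ) * ψ y

/-- The normalized transfer operator `L̂_φ = exp(-P(f,φ)) L_φ`. -/
def transferHat (f φ : ℝ → ℝ) (X : Set ℝ) : (ℝ → ℝ) → ℝ → ℝ :=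
  fun ψ x => Real.exp (-(pres f X φ)) * transfer f φ X ψ x

/-- Keller's pseudo-distance `d(x,y) = m {z ∈ X : x ≤ z ≤ y or y ≤ z ≤ x}`. -/
def pdist (m : Measure ℝ) (X : Set ℝ) (x y : ℝ) : ℝ≥0∞ :=
  m {z | z ∈ X ∧ ((x ≤ z ∧ z ≤ y) ∨ (y ≤ z ∧ z ≤ x))}

/-- Ball for the pseudo-distance `d`. -/
def dBall (m : Measure ℝ) (X : Set ℝ) (x : ℝ) (ε : ℝ) : Set ℝ :=
  {y | y ∈ X ∧ pdist m X x y < ENNReal.ofReal ε}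

/-- `osc(h, ε, x)`: essential supremum of `|h(y) - h(y')|` over `y, y' ∈ B_d(x,ε)`. -/
def oscK (m : Measure ℝ) [SFinite m] (X : Set ℝ) (h : ℝ → ℂ) (ε : ℝ) (x : ℝ) : ℝ≥0∞ :=
  essSup (fun p : ℝ × ℝ => ENNReal.ofReal ‖h p.1 - h p.2‖)
    ((m.prod m).restrict (dBall m X x ε ×ˢ dBall m X x ε))

/-- `osc₁(h,ε) = ∫_X osc(h,ε,x) dm(x)`. -/
def osc1K (m : Measure ℝ) [SFinite m] (X : Set ℝ) (h : ℝ → ℂ) (ε : ℝ) : ℝ≥0∞ :=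
  ∫⁻ x in X, oscK m X h ε x ∂m

/-- Keller seminorm `|h|_{α,1} = sup_{ε ∈ (0,A]} osc₁(h,ε)/ε^α`. -/
def kellerSemi (A α : ℝ) (m : Measure ℝ) [SFinite m] (X : Set ℝ) (h : ℝ → ℂ) : ℝ≥0∞ :=
  ⨆ ε ∈ Ioc (0:ℝ) A, osc1K m X h ε / ENNReal.ofReal (ε ^ α)

/-- Keller norm `‖h‖_{α,1} = ‖h‖_{L¹(m)} + |h|_{α,1}`. -/
def kellerNorm (A α : ℝ) (m : Measure ℝ) [SFinite m] (X : Set ℝ) (h : ℝ → ℂ) : ℝ≥0∞ :=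
  (∫⁻ x in X, ENNReal.ofReal ‖h x‖ ∂m) + kellerSemi A α m X h

/-- Membership in the Keller space `H^{α,1}(m)`. -/
def MemKeller (A α : ℝ) (m : Measure ℝ) [SFinite m] (X : Set ℝ) (h : ℝ → ℂ) : Prop :=
  kellerNorm A α m X h ≠ ⊤

/-- `p`-variation `Var_p(h)` of `h` on `X`. -/
def varP (p : ℝ) (X : Set ℝ) (h : ℝ → ℂ) : ℝ≥0∞ :=
  ⨆ (k : ℕ) (x : Fin (k + 1) → ℝ) (_ : StrictMono x) (_ : ∀ i, x i ∈ X),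
    ENNReal.ofReal ((∑ i : Fin k, ‖h (x i.succ) - h (x i.castSucc)‖ ^ p) ^ (1 / p))

/-- `BV_p`-norm `‖h‖_{BV_p} = Var_p(h) + ‖h‖_∞`. -/
def bvNorm (p : ℝ) (X : Set ℝ) (h : ℝ → ℂ) : ℝ≥0∞ :=
  varP p X h + ⨆ x ∈ X, ENNReal.ofReal ‖h x‖

/-- Sup-norm of a complex function on `X`. -/
def supNormOn (X : Set ℝ) (ψ : ℝ → ℂ) : ℝ := sSup ((fun x => ‖ψ x‖) '' X)

/-- Hölder seminorm `|ψ|_α` of a complex function on `X`. -/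
def holderSemiOn (α : ℝ) (X : Set ℝ) (ψ : ℝ → ℂ) : ℝ :=
  sSup ((fun p : ℝ × ℝ => ‖ψ p.1 - ψ p.2‖ / |p.1 - p.2| ^ α) ''
    {p : ℝ × ℝ | p.1 ∈ X ∧ p.2 ∈ X ∧ p.1 ≠ p.2})

/-- Hölder norm `‖ψ‖_α = ‖ψ‖_∞ + |ψ|_α` on `X`. -/
def holderNormOn (α : ℝ) (X : Set ℝ) (ψ : ℝ → ℂ) : ℝ :=
  supNormOn X ψ + holderSemiOn α X ψ

/-- `x` is a turning point of `f : I → I` : `f` is not locally injective at `x`. -/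
def IsTurningPoint (f : ℝ → ℝ) (I : Set ℝ) (x : ℝ) : Prop :=
  x ∈ I ∧ ∀ ε > 0, ¬ InjOn f (Metric.ball x ε ∩ I)


namespace Statement11Aux

def segF (N : ℕ → ℕ) (n : ℕ) : ℕ := Nat.findGreatest (fun k => N k ≤ n) n

def vF (N : ℕ → ℕ) (k : ℕ) : ℝ := (N k : ℝ) / k

def slF (N : ℕ → ℕ) (k : ℕ) : ℝ := (vF N (k+1) - vF N k) / ((N (k+1) : ℝ) - (N k : ℝ))

def bF (N : ℕ → ℕ) (n : ℕ) : ℝ :=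
  if N 1 ≤ n then vF N (segF N n) + slF N (segF N n) * ((n : ℝ) - (N (segF N n) : ℝ))
  else vF N 1

variable {N : ℕ → ℕ}

theorem seg_eq (hm : StrictMono N) (hg : ∀ k, k + 1 ≤ N k) {k n : ℕ}
    (h1 : N k ≤ n) (h2 : n < N (k + 1)) : segF N n = k := by
  rw [segF, Nat.findGreatest_eq_iff]
  refine ⟨le_trans (le_trans (Nat.le_succ k) (hg k)) h1, fun _ => h1, fun m hm1 hm2 hPm => ?_⟩
  have : N (k + 1) ≤ N m := hm.monotone hm1
  omega

theorem seg_spec (hm : StrictMono N) (hg : ∀ k, k + 1 ≤ N k) {n : ℕ} (h : N 1 ≤ n) :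
    1 ≤ segF N n ∧ N (segF N n) ≤ n ∧ n < N (segF N n + 1) := by
  have h1n : 1 ≤ n := le_trans (le_trans (by omega) (hg 1)) h
  simp only [segF]
  refine ⟨Nat.le_findGreatest (P := fun k => N k ≤ n) h1n h,
    Nat.findGreatest_spec (P := fun k => N k ≤ n) h1n h, ?_⟩
  by_cases hle : Nat.findGreatest (fun k => N k ≤ n) n + 1 ≤ n
  · by_contra hcon
    exact Nat.findGreatest_is_greatest (P := fun k => N k ≤ n)
      (k := Nat.findGreatest (fun k => N k ≤ n) n + 1) (Nat.lt_succ_self _) hle (by omega)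
  · have hle2 : Nat.findGreatest (fun k => N k ≤ n) n ≤ n := Nat.findGreatest_le n
    have heq : Nat.findGreatest (fun k => N k ≤ n) n = n := by omega
    rw [heq]
    have := hg (n + 1)
    omega

theorem bF_formula (hm : StrictMono N) (hg : ∀ k, k + 1 ≤ N k) {k n : ℕ}
    (hk : 1 ≤ k) (h1 : N k ≤ n) (h2 : n ≤ N (k + 1)) :
    bF N n = vF N k + slF N k * ((n : ℝ) - (N k : ℝ)) := by
  have hb : N 1 ≤ n := le_trans (hm.monotone hk) h1
  rcases lt_or_eq_of_le h2 with hlt | he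
  · rw [bF, if_pos hb, seg_eq hm hg h1 hlt]
  · have hseg : segF N n = k + 1 := by
      apply seg_eq hm hg (le_of_eq he.symm)
      rw [he]; exact hm (Nat.lt_succ_self _)
    have hD : (N k : ℝ) < (N (k+1) : ℝ) := by exact_mod_cast hm (Nat.lt_succ_self k)
    rw [bF, if_pos hb, hseg, he, sub_self, mul_zero, add_zero, slF,
      div_mul_cancel₀ _ (ne_of_gt (sub_pos.mpr hD))]
    ring

theorem sl_abs (hm : StrictMono N) (hd : ∀ k, 2 * N k ≤ N (k + 1)) (hg : ∀ k, k + 1 ≤ N k)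
    {k : ℕ} (hk : 1 ≤ k) : |slF N k| ≤ 2 / k := by
  set x : ℝ := (N k : ℝ) with hx
  set y : ℝ := (N (k+1) : ℝ) with hy
  set K : ℝ := (k : ℝ) with hK
  have h1 : (1 : ℝ) ≤ x := by
    have := hg k; rw [hx]; exact_mod_cast by omega
  have h2 : 2 * x ≤ y := by rw [hx, hy]; exact_mod_cast hd k
  have hKR : (1 : ℝ) ≤ K := by rw [hK]; exact_mod_cast hk
  have hK0 : (0 : ℝ) < K := by linarith
  have hD : (0 : ℝ) < y - x := by linarith
  have hy0 : (0 : ℝ) < y := by linarith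
  have hnum1 : y / (K + 1) - x / K ≤ 2 / K * (y - x) := by
    have e1 : y / (K + 1) ≤ y / K := by gcongr; linarith
    have e2 : y / K ≤ (2 * (y - x)) / K := by gcongr <;> linarith
    have e3 : (2 * (y - x)) / K = 2 / K * (y - x) := by ring
    have e4 : 0 ≤ x / K := by positivity
    linarith
  have hnum2 : -(2 / K * (y - x)) ≤ y / (K + 1) - x / K := by
    have e1 : (0:ℝ) ≤ y / (K + 1) := by positivity
    have e2 : x / K ≤ (2 * (y - x)) / K := by gcongr <;> linarith
    have e3 : (2 * (y - x)) / K = 2 / K * (y - x) := by ring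
    linarith
  have hsl : slF N k = (y / (K + 1) - x / K) / (y - x) := by
    rw [slF, vF, vF]
    push_cast
    rw [← hx, ← hy, ← hK]
  rw [hsl, abs_le]
  constructor
  · rw [le_div_iff₀ hD]; linarith
  · rw [div_le_iff₀ hD]; linarith

theorem bF_le (hm : StrictMono N) (hd : ∀ k, 2 * N k ≤ N (k + 1)) (hg : ∀ k, k + 1 ≤ N k)
    {k n : ℕ} (hk : 1 ≤ k) (h1 : N k ≤ n) (h2 : n ≤ N (k + 1)) :
    bF N n ≤ 3 * n / k := by
  rw [bF_formula hm hg hk h1 h2]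
  have habs := sl_abs hm hd hg hk
  have hK0 : (0 : ℝ) < (k : ℝ) := by exact_mod_cast hk
  have ht0 : (0 : ℝ) ≤ (n : ℝ) - (N k : ℝ) := by
    have : (N k : ℝ) ≤ n := by exact_mod_cast h1
    linarith
  have htn : (n : ℝ) - (N k : ℝ) ≤ n := by
    have : (0:ℝ) ≤ (N k : ℝ) := by positivity
    linarith
  have e1 : slF N k * ((n : ℝ) - (N k : ℝ)) ≤ 2 / k * n := by
    calc slF N k * ((n : ℝ) - (N k : ℝ)) ≤ |slF N k| * ((n : ℝ) - (N k : ℝ)) :=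
          mul_le_mul_of_nonneg_right (le_abs_self _) ht0
      _ ≤ 2 / k * ((n : ℝ) - (N k : ℝ)) := mul_le_mul_of_nonneg_right habs ht0
      _ ≤ 2 / k * n := by
          apply mul_le_mul_of_nonneg_left htn
          positivity
  have e2 : vF N k ≤ (n : ℝ) / k := by
    rw [vF]
    gcongr
    
  have e3 : (n:ℝ) / k + 2 / k * n = 3 * n / k := by ring
  linarith

theorem seg_ge (hg : ∀ k, k + 1 ≤ N k) {k n : ℕ} (h : N k ≤ n) : k ≤ segF N n :=
  Nat.le_findGreatest (le_trans (le_trans (Nat.le_succ k) (hg k)) h) h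

end Statement11Aux

/-- Patterson's lemma on the transition parameter. -/
theorem statement11 (a : ℕ → ℝ) (c : ℝ)
    (hc : Filter.limsup (fun n : ℕ => ((a n / n : ℝ) : EReal)) atTop = (c : EReal)) :
    ∃ b : ℕ → ℝ, (∀ n, 0 < b n) ∧
      Tendsto (fun n : ℕ => b n / b (n + 1)) atTop (𝓝 1) ∧
      (∀ s : ℝ, c < s → Summable (fun n : ℕ => b n * Real.exp (a n - n * s))) ∧
      (∀ s : ℝ, s ≤ c → ¬ Summable (fun n : ℕ => b n * Real.exp (a n - n * s))) := by
  classical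
  -- Consequences of the limsup hypothesis
  have H1 : ∀ ε : ℝ, 0 < ε → ∀ᶠ n : ℕ in atTop, a n < n * (c + ε) := by
    intro ε hε
    have hlt : Filter.limsup (fun n : ℕ => ((a n / n : ℝ) : EReal)) atTop
        < ((c + ε : ℝ) : EReal) := by
      rw [hc]
      exact_mod_cast (by linarith : c < c + ε)
    filter_upwards [Filter.eventually_lt_of_limsup_lt hlt, eventually_ge_atTop 1] with n hn hn1
    have hn' : a n / n < c + ε := by exact_mod_cast hn
    have hp : (0:ℝ) < n := by exact_mod_cast hn1
    have h2 := (div_lt_iff₀ hp).mp hn'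
    nlinarith [h2]
  have H2 : ∀ ε : ℝ, 0 < ε → ∀ m : ℕ, ∃ n : ℕ, m ≤ n ∧ (n:ℝ) * (c - ε) < a n := by
    intro ε hε m
    have hgt : ((c - ε : ℝ) : EReal)
        < Filter.limsup (fun n : ℕ => ((a n / n : ℝ) : EReal)) atTop := by
      rw [hc]
      exact_mod_cast (by linarith : c - ε < c)
    have hfreq := Filter.frequently_lt_of_lt_limsup (by isBoundedDefault) hgt
    obtain ⟨n, hn1, hn2⟩ := (hfreq.and_eventually (eventually_ge_atTop (max m 1))).exists
    refine ⟨n, le_trans (le_max_left _ _) hn2, ?_⟩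
    have hp : (0:ℝ) < n := by
      have : 1 ≤ n := le_trans (le_max_right m 1) hn2
      exact_mod_cast this
    have hn' : c - ε < a n / n := by exact_mod_cast hn1
    have h2 := (lt_div_iff₀ hp).mp hn'
    nlinarith [h2]
  -- Choice of the sparse subsequence N
  have HE : ∀ k m : ℕ, ∃ n : ℕ, max (2 * m) (k + 2) ≤ n ∧ (n:ℝ) * (c - 1/((k:ℝ)+1)) < a n := by
    intro k m
    exact H2 (1/((k:ℝ)+1)) (by positivity) (max (2*m) (k+2))
  choose g hg1 hg2 using HE
  obtain ⟨N, hN0, hNsucc⟩ : ∃ N : ℕ → ℕ, N 0 = 1 ∧ ∀ k, N (k+1) = g k (N k) :=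
    ⟨fun k => Nat.rec 1 (fun k ih => g k ih) k, rfl, fun k => rfl⟩
  have hd : ∀ k, 2 * N k ≤ N (k+1) := by
    intro k; rw [hNsucc k]
    exact le_trans (le_max_left _ _) (hg1 k (N k))
  have hk2 : ∀ k, k + 2 ≤ N (k+1) := by
    intro k; rw [hNsucc k]
    exact le_trans (le_max_right _ _) (hg1 k (N k))
  have hg' : ∀ k, k + 1 ≤ N k := by
    intro k
    cases k with
    | zero => omega
    | succ j => have := hk2 j; omega
  have hm : StrictMono N := by
    apply strictMono_nat_of_lt_succ
    intro k
    have := hd k; have := hg' k; omega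
  have haN : ∀ k, 1 ≤ k → (N k : ℝ) * (c - 1/(k:ℝ)) < a (N k) := by
    intro k hk
    obtain ⟨j, rfl⟩ : ∃ j, k = j + 1 := ⟨k - 1, by omega⟩
    rw [hNsucc j]
    have h2 := hg2 j (N j)
    push_cast
    exact h2
  -- The sequence b
  set β : ℕ → ℝ := Statement11Aux.bF N with hβ
  refine ⟨fun n => Real.exp (β n), fun n => Real.exp_pos _, ?_, ?_, ?_⟩
  · -- ratio tends to 1
    have hdiff : Tendsto (fun n : ℕ => β n - β (n+1)) atTop (𝓝 0) := by
      rw [Metric.tendsto_atTop]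
      intro ε hε
      obtain ⟨k, hkgt⟩ := exists_nat_gt (2/ε)
      have hkpos : (0:ℝ) < (k:ℝ) := lt_trans (by positivity) hkgt
      have hk1 : 1 ≤ k := by
        have : 0 < k := by exact_mod_cast hkpos
        omega
      refine ⟨N k, fun n hn => ?_⟩
      have hNm1 : N 1 ≤ n := le_trans (hm.monotone hk1) hn
      obtain ⟨hj1, hjle, hjlt⟩ := Statement11Aux.seg_spec hm hg' hNm1
      have hjk : k ≤ Statement11Aux.segF N n :=
        Statement11Aux.seg_ge hg' (le_trans (le_refl _) hn)
      have hβd : β (n+1) - β n = Statement11Aux.slF N (Statement11Aux.segF N n) := by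
        have f1 := Statement11Aux.bF_formula hm hg' hj1 hjle (le_of_lt hjlt)
        have f2 := Statement11Aux.bF_formula (k := Statement11Aux.segF N n) hm hg' hj1
          (le_trans hjle (Nat.le_succ n)) hjlt
        rw [hβ, f1, f2]
        push_cast
        ring
      have habs := Statement11Aux.sl_abs hm hd hg' hj1
      rw [Real.dist_eq, sub_zero, abs_sub_comm, hβd]
      have hjpos : (0:ℝ) < (Statement11Aux.segF N n : ℝ) := by
        have : 0 < Statement11Aux.segF N n := hj1
        exact_mod_cast this
      have h2jk : 2/(Statement11Aux.segF N n : ℝ) ≤ 2/(k:ℝ) := by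
        gcongr
      have hfin : 2/(k:ℝ) < ε := by
        rw [div_lt_iff₀ hkpos]
        have h2 := (div_lt_iff₀ hε).mp hkgt
        linarith
      linarith
    have heq : (fun n : ℕ => Real.exp (β n) / Real.exp (β (n+1)))
        = fun n : ℕ => Real.exp (β n - β (n+1)) := by
      funext n; rw [Real.exp_sub]
    rw [heq]
    have hcomp := (Real.continuous_exp.continuousAt (x := 0)).tendsto.comp hdiff
    simpa [Function.comp_def] using hcomp
  · -- convergence for s > c
    intro s hs
    set ε := (s - c)/3 with hεdef
    have hε0 : 0 < ε := by rw [hεdef]; linarith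
    obtain ⟨k, hkgt⟩ := exists_nat_gt (3/ε)
    have hkpos : (0:ℝ) < (k:ℝ) := lt_trans (by positivity) hkgt
    have hk1 : 1 ≤ k := by
      have : 0 < k := by exact_mod_cast hkpos
      omega
    have h3k : 3/(k:ℝ) ≤ ε := by
      rw [div_le_iff₀ hkpos]
      have h2 := (div_lt_iff₀ hε0).mp hkgt
      nlinarith
    obtain ⟨M, hM⟩ := eventually_atTop.mp (H1 ε hε0)
    rw [← _root_.summable_nat_add_iff (max M (N k))]
    have hsum : Summable (fun n : ℕ => Real.exp (-ε) ^ (n + max M (N k))) := by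
      have heq : (fun n : ℕ => Real.exp (-ε) ^ (n + max M (N k)))
          = fun n : ℕ => Real.exp (-ε) ^ n * Real.exp (-ε) ^ (max M (N k)) := by
        funext n; rw [pow_add]
      rw [heq]
      exact (summable_geometric_of_lt_one (le_of_lt (Real.exp_pos _))
        (Real.exp_lt_one_iff.mpr (by linarith))).mul_right _
    refine Summable.of_nonneg_of_le (fun n => by positivity) (fun n => ?_) hsum
    set m := n + max M (N k) with hmdef
    have hmN : N k ≤ m := le_trans (le_max_right M (N k)) (Nat.le_add_left _ _)
    have hmM : M ≤ m := le_trans (le_max_left M (N k)) (Nat.le_add_left _ _)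
    have hNm1 : N 1 ≤ m := le_trans (hm.monotone hk1) hmN
    obtain ⟨hj1, hjle, hjlt⟩ := Statement11Aux.seg_spec hm hg' hNm1
    have hjk : k ≤ Statement11Aux.segF N m := Statement11Aux.seg_ge hg' hmN
    have hjpos : (0:ℝ) < (Statement11Aux.segF N m : ℝ) := by
      have : 0 < Statement11Aux.segF N m := hj1
      exact_mod_cast this
    have hβle : β m ≤ ε * m := by
      have hb3 := Statement11Aux.bF_le hm hd hg' hj1 hjle (le_of_lt hjlt)
      have h1 : 3*(m:ℝ)/(Statement11Aux.segF N m : ℝ) ≤ 3*(m:ℝ)/(k:ℝ) := by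
        gcongr
      have h2 : 3*(m:ℝ)/(k:ℝ) = (3/(k:ℝ))*(m:ℝ) := by ring
      have h3 : (3/(k:ℝ))*(m:ℝ) ≤ ε * m := by
        apply mul_le_mul_of_nonneg_right h3k
        positivity
      rw [hβ] at *
      linarith
    have haM := hM m hmM
    rw [← Real.exp_add]
    have hexp : β m + (a m - (m:ℝ)*s) ≤ (m:ℝ) * (-ε) := by
      have e2 : (m:ℝ)*s = (m:ℝ)*c + 3*((m:ℝ)*ε) := by rw [hεdef]; ring
      have e3 : (m:ℝ)*(c+ε) = (m:ℝ)*c + (m:ℝ)*ε := by ring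
      have e4 : ε * (m:ℝ) = (m:ℝ)*ε := by ring
      have e5 : (m:ℝ)*(-ε) = -((m:ℝ)*ε) := by ring
      linarith
    calc Real.exp (β m + (a m - (m:ℝ)*s)) ≤ Real.exp ((m:ℝ)*(-ε)) := Real.exp_le_exp.mpr hexp
      _ = Real.exp (-ε) ^ m := Real.exp_nat_mul _ m
  · -- divergence for s ≤ c
    intro s hs hsum
    have h0 := hsum.tendsto_atTop_zero
    have hev := h0.eventually_lt_const (by norm_num : (0:ℝ) < 1)
    obtain ⟨M, hM⟩ := eventually_atTop.mp hev
    have hk1 : 1 ≤ M + 1 := by omega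
    have hNk : M ≤ N (M + 1) := by have := hg' (M+1); omega
    have hlt1 := hM (N (M+1)) hNk
    have hβNk : β (N (M+1)) = (N (M+1) : ℝ)/((M+1 : ℕ):ℝ) := by
      have hf := Statement11Aux.bF_formula (k := M+1) hm hg' hk1 (le_refl (N (M+1)))
        (le_of_lt (hm (Nat.lt_succ_self (M+1))))
      rw [hβ, hf, sub_self, mul_zero, add_zero]
      rfl
    have haNk := haN (M+1) hk1
    have hkR : (0:ℝ) < ((M+1 : ℕ):ℝ) := by positivity
    have hNR : (0:ℝ) ≤ (N (M+1) : ℝ) := by positivity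
    have hge : (1:ℝ) < Real.exp (β (N (M+1))) * Real.exp (a (N (M+1)) - (N (M+1):ℝ) * s) := by
      rw [← Real.exp_add, show (1:ℝ) = Real.exp 0 from (Real.exp_zero).symm]
      apply Real.exp_lt_exp.mpr
      have e : (N (M+1):ℝ)*(c - 1/((M+1:ℕ):ℝ)) = (N (M+1):ℝ)*c - (N (M+1):ℝ)/((M+1:ℕ):ℝ) := by
        ring
      have hsc : (N (M+1):ℝ)*s ≤ (N (M+1):ℝ)*c := mul_le_mul_of_nonneg_left hs hNR
      have haNk' : (N (M+1):ℝ)*c - (N (M+1):ℝ)/((M+1:ℕ):ℝ) < a (N (M+1)) := by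
        rw [← e]
        exact_mod_cast haNk
      rw [hβNk]
      linarith
    simp only at hlt1
    linarith
end
end

section
/- Fix A > 0, let X be a compact subset of ℝ, let m be an atom-free Borel probability measure on X, and let α ∈ (0,1]. Then the Keller space H^{α,1}(m), equipped with the norm ‖·‖_{α,1}, is a Banach space (i.e. it is complete). -/
open MeasureTheory Filter Set Topology ENNReal NNReal

noncomputable section

section Stmt12Aux

open MeasureTheory

variable {m : Measure ℝ} {X : Set ℝ}

lemma stmt12_measurable_pdist [SFinite m] (hXm : MeasurableSet X) :
    Measurable fun q : ℝ × ℝ => pdist m X q.1 q.2 := by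
  have hs : MeasurableSet {qz : (ℝ × ℝ) × ℝ |
      qz.2 ∈ X ∧ ((qz.1.1 ≤ qz.2 ∧ qz.2 ≤ qz.1.2) ∨ (qz.1.2 ≤ qz.2 ∧ qz.2 ≤ qz.1.1))} := by
    refine (measurable_snd hXm).inter (MeasurableSet.union (MeasurableSet.inter ?_ ?_)
      (MeasurableSet.inter ?_ ?_))
    · exact measurableSet_le measurable_fst.fst measurable_snd
    · exact measurableSet_le measurable_snd measurable_fst.snd
    · exact measurableSet_le measurable_fst.snd measurable_snd
    · exact measurableSet_le measurable_snd measurable_fst.fst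
  exact measurable_measure_prodMk_left (ν := m) hs

lemma stmt12_measurableSet_dBallGraph [SFinite m] (hXm : MeasurableSet X) (ε : ℝ) :
    MeasurableSet {q : ℝ × ℝ | q.2 ∈ dBall m X q.1 ε} := by
  have : {q : ℝ × ℝ | q.2 ∈ dBall m X q.1 ε}
      = (fun q : ℝ × ℝ => q.2) ⁻¹' X ∩ {q : ℝ × ℝ | pdist m X q.1 q.2 < ENNReal.ofReal ε} := rfl
  rw [this]
  exact (measurable_snd hXm).inter
    (measurableSet_lt (stmt12_measurable_pdist hXm) measurable_const)

lemma stmt12_measurable_oscK [SFinite m] (hXm : MeasurableSet X) {ψ : ℝ → ℂ}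
    (hψ : Measurable ψ) (ε : ℝ) : Measurable fun x => oscK m X ψ ε x := by
  set F : ℝ × ℝ → ℝ≥0∞ := fun p => ENNReal.ofReal ‖ψ p.1 - ψ p.2‖ with hF
  have hFm : Measurable F :=
    ((hψ.comp measurable_fst).sub (hψ.comp measurable_snd)).norm.ennreal_ofReal
  set M : ℝ≥0∞ → ℝ → ℝ≥0∞ := fun c x =>
    (m.prod m) ({p : ℝ × ℝ | c < F p} ∩ dBall m X x ε ×ˢ dBall m X x ε) with hM
  have hMmeas : ∀ c, Measurable (M c) := by
    intro c
    have hs : MeasurableSet {xp : ℝ × (ℝ × ℝ) |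
        c < F xp.2 ∧ (xp.2.1 ∈ dBall m X xp.1 ε ∧ xp.2.2 ∈ dBall m X xp.1 ε)} := by
      refine MeasurableSet.inter ?_ (MeasurableSet.inter ?_ ?_)
      · exact (hFm.comp measurable_snd) measurableSet_Ioi
      · exact (measurable_fst.prodMk measurable_snd.fst)
          (stmt12_measurableSet_dBallGraph hXm ε)
      · exact (measurable_fst.prodMk measurable_snd.snd)
          (stmt12_measurableSet_dBallGraph hXm ε)
    have key := measurable_measure_prodMk_left (ν := m.prod m) hs
    have : M c = fun x => (m.prod m) (Prod.mk x ⁻¹'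
        {xp : ℝ × (ℝ × ℝ) |
          c < F xp.2 ∧ (xp.2.1 ∈ dBall m X xp.1 ε ∧ xp.2.2 ∈ dBall m X xp.1 ε)}) := by
      funext x
      refine congrArg (m.prod m) ?_
      ext p
      simp only [Set.mem_inter_iff, Set.mem_setOf_eq, Set.mem_prod, Set.mem_preimage]
    rw [this]
    exact key
  have hosc : (fun x => oscK m X ψ ε x)
      = fun x => ⨅ q : ℚ, (if M (ENNReal.ofReal q) x = 0 then ENNReal.ofReal q else ⊤) := by
    funext x
    rw [oscK, essSup_eq_sInf]
    have hres : ∀ c : ℝ≥0∞,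
        ((m.prod m).restrict (dBall m X x ε ×ˢ dBall m X x ε)) {p | c < F p} = M c x :=
      fun c => Measure.restrict_apply (hFm measurableSet_Ioi)
    apply le_antisymm
    · refine le_iInf fun q => ?_
      split_ifs with hq
      · exact sInf_le (by rw [Set.mem_setOf_eq, hres]; exact hq)
      · exact le_top
    · refine le_of_forall_gt_imp_ge_of_dense fun b hb => ?_
      obtain ⟨c, hcS, hcb⟩ := sInf_lt_iff.mp hb
      obtain ⟨q, _, hcq, hqb⟩ := ENNReal.lt_iff_exists_rat_btwn.mp hcb
      have hq0 : M (ENNReal.ofReal q) x = 0 := by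
        have hsub : {p : ℝ × ℝ | ENNReal.ofReal q < F p} ⊆ {p : ℝ × ℝ | c < F p} := by
          intro p hp
          exact lt_of_le_of_lt hcq.le hp
        have h1 : M (ENNReal.ofReal q) x ≤ M c x :=
          measure_mono (Set.inter_subset_inter_left _ hsub)
        have hMc : M c x = 0 := by rw [← hres]; exact hcS
        exact le_antisymm (h1.trans hMc.le) (by simp)
      refine le_trans (iInf_le _ q) ?_
      rw [if_pos hq0]
      exact le_of_lt hqb
  rw [hosc]
  exact Measurable.iInf fun q => Measurable.ite
    ((hMmeas (ENNReal.ofReal q)) (measurableSet_singleton 0)) measurable_const measurable_const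

lemma stmt12_oscK_le_liminf [IsFiniteMeasure m] {ψ : ℝ → ℂ} {u : ℕ → ℝ → ℂ}
    (hae : ∀ᵐ x ∂m, Tendsto (fun k => u k x) atTop (𝓝 (ψ x))) (ε : ℝ) (x : ℝ) :
    oscK m X ψ ε x ≤ Filter.liminf (fun k => oscK m X (u k) ε x) atTop := by
  set μ' := (m.prod m).restrict (dBall m X x ε ×ˢ dBall m X x ε) with hμ'
  obtain ⟨T, hT1, hT2, hT3⟩ := exists_measurable_superset_of_null (ae_iff.mp hae)
  have hbad : μ' (T ×ˢ (Set.univ : Set ℝ) ∪ (Set.univ : Set ℝ) ×ˢ T) = 0 := by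
    refine le_antisymm ?_ (by simp)
    calc μ' (T ×ˢ (Set.univ : Set ℝ) ∪ (Set.univ : Set ℝ) ×ˢ T)
        ≤ (m.prod m) (T ×ˢ (Set.univ : Set ℝ) ∪ (Set.univ : Set ℝ) ×ˢ T) :=
          Measure.restrict_le_self _
      _ ≤ (m.prod m) (T ×ˢ (Set.univ : Set ℝ)) + (m.prod m) ((Set.univ : Set ℝ) ×ˢ T) :=
          measure_union_le _ _
      _ = 0 := by rw [Measure.prod_prod, Measure.prod_prod, hT3]; simp
  have h1 : ∀ᵐ p ∂μ', ENNReal.ofReal ‖ψ p.1 - ψ p.2‖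
      ≤ Filter.liminf (fun k => ENNReal.ofReal ‖u k p.1 - u k p.2‖) atTop := by
    rw [ae_iff]
    refine measure_mono_null (fun p hp => ?_) hbad
    simp only [Set.mem_setOf_eq, not_le] at hp
    by_contra hpb
    simp only [Set.mem_union, Set.mem_prod, Set.mem_univ, and_true, true_and, not_or] at hpb
    have t1 : Tendsto (fun k => u k p.1) atTop (𝓝 (ψ p.1)) := by
      by_contra hc; exact hpb.1 (hT1 hc)
    have t2 : Tendsto (fun k => u k p.2) atTop (𝓝 (ψ p.2)) := by
      by_contra hc; exact hpb.2 (hT1 hc)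
    have hlim : Tendsto (fun k => ENNReal.ofReal ‖u k p.1 - u k p.2‖) atTop
        (𝓝 (ENNReal.ofReal ‖ψ p.1 - ψ p.2‖)) := ENNReal.tendsto_ofReal ((t1.sub t2).norm)
    rw [hlim.liminf_eq] at hp
    exact lt_irrefl _ hp
  have h2 : ∀ᵐ p ∂μ', ∀ k, ENNReal.ofReal ‖u k p.1 - u k p.2‖ ≤ oscK m X (u k) ε x :=
    ae_all_iff.mpr fun k =>
      ENNReal.ae_le_essSup (fun p : ℝ × ℝ => ENNReal.ofReal ‖u k p.1 - u k p.2‖)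
  refine essSup_le_of_ae_le _ ?_
  filter_upwards [h1, h2] with p hp1 hp2
  exact hp1.trans (Filter.liminf_le_liminf (Filter.Eventually.of_forall hp2))

lemma stmt12_osc1K_le_liminf [IsFiniteMeasure m] (hXm : MeasurableSet X) {ψ : ℝ → ℂ}
    {u : ℕ → ℝ → ℂ} (hu : ∀ k, Measurable (u k))
    (hae : ∀ᵐ x ∂m, Tendsto (fun k => u k x) atTop (𝓝 (ψ x))) (ε : ℝ) :
    osc1K m X ψ ε ≤ Filter.liminf (fun k => osc1K m X (u k) ε) atTop :=
  calc osc1K m X ψ ε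
      ≤ ∫⁻ x in X, Filter.liminf (fun k => oscK m X (u k) ε x) atTop ∂m :=
        lintegral_mono fun x => stmt12_oscK_le_liminf hae ε x
    _ ≤ Filter.liminf (fun k => osc1K m X (u k) ε) atTop :=
        lintegral_liminf_le fun k => stmt12_measurable_oscK hXm (hu k) ε

lemma stmt12_liminf_div_const (a : ℕ → ℝ≥0∞) (c : ℝ≥0∞) :
    (Filter.liminf a atTop) / c ≤ Filter.liminf (fun k => a k / c) atTop := by
  rw [Filter.liminf_eq_iSup_iInf_of_nat, Filter.liminf_eq_iSup_iInf_of_nat, ENNReal.iSup_div]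
  refine iSup_mono fun n => le_iInf₂ fun i hi => ?_
  exact ENNReal.div_le_div_right (iInf₂_le i hi) c

lemma stmt12_kellerSemi_le_liminf [IsFiniteMeasure m] (hXm : MeasurableSet X) (A α : ℝ)
    {ψ : ℝ → ℂ} {u : ℕ → ℝ → ℂ} (hu : ∀ k, Measurable (u k))
    (hae : ∀ᵐ x ∂m, Tendsto (fun k => u k x) atTop (𝓝 (ψ x))) :
    kellerSemi A α m X ψ ≤ Filter.liminf (fun k => kellerSemi A α m X (u k)) atTop := by
  refine iSup₂_le fun ε hε => ?_
  calc osc1K m X ψ ε / ENNReal.ofReal (ε ^ α)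
      ≤ (Filter.liminf (fun k => osc1K m X (u k) ε) atTop) / ENNReal.ofReal (ε ^ α) :=
        ENNReal.div_le_div_right (stmt12_osc1K_le_liminf hXm hu hae ε) _
    _ ≤ Filter.liminf (fun k => osc1K m X (u k) ε / ENNReal.ofReal (ε ^ α)) atTop :=
        stmt12_liminf_div_const _ _
    _ ≤ Filter.liminf (fun k => kellerSemi A α m X (u k)) atTop :=
        Filter.liminf_le_liminf (Filter.Eventually.of_forall fun k =>
          le_iSup₂_of_le ε hε le_rfl)

lemma stmt12_l1_le_liminf [IsFiniteMeasure m] {ψ : ℝ → ℂ} {u : ℕ → ℝ → ℂ}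
    (hu : ∀ k, Measurable (u k))
    (hae : ∀ᵐ x ∂m, Tendsto (fun k => u k x) atTop (𝓝 (ψ x))) :
    (∫⁻ x in X, ENNReal.ofReal ‖ψ x‖ ∂m)
      ≤ Filter.liminf (fun k => ∫⁻ x in X, ENNReal.ofReal ‖u k x‖ ∂m) atTop := by
  have hptwise : ∀ᵐ x ∂(m.restrict X), ENNReal.ofReal ‖ψ x‖
      ≤ Filter.liminf (fun k => ENNReal.ofReal ‖u k x‖) atTop := by
    filter_upwards [ae_restrict_of_ae hae] with x hx
    have hlim : Tendsto (fun k => ENNReal.ofReal ‖u k x‖) atTop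
        (𝓝 (ENNReal.ofReal ‖ψ x‖)) := ENNReal.tendsto_ofReal hx.norm
    rw [hlim.liminf_eq]
  calc (∫⁻ x in X, ENNReal.ofReal ‖ψ x‖ ∂m)
      ≤ ∫⁻ x in X, Filter.liminf (fun k => ENNReal.ofReal ‖u k x‖) atTop ∂m :=
        lintegral_mono_ae hptwise
    _ ≤ Filter.liminf (fun k => ∫⁻ x in X, ENNReal.ofReal ‖u k x‖ ∂m) atTop :=
        lintegral_liminf_le fun k => (hu k).norm.ennreal_ofReal

lemma stmt12_oscK_add_le [SFinite m] (f g : ℝ → ℂ) (ε x : ℝ) :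
    oscK m X (fun y => f y + g y) ε x ≤ oscK m X f ε x + oscK m X g ε x := by
  refine essSup_le_of_ae_le _ ?_
  filter_upwards [ENNReal.ae_le_essSup (fun p : ℝ × ℝ => ENNReal.ofReal ‖f p.1 - f p.2‖)
      (μ := (m.prod m).restrict (dBall m X x ε ×ˢ dBall m X x ε)),
    ENNReal.ae_le_essSup (fun p : ℝ × ℝ => ENNReal.ofReal ‖g p.1 - g p.2‖)
      (μ := (m.prod m).restrict (dBall m X x ε ×ˢ dBall m X x ε))] with p h1 h2
  calc ENNReal.ofReal ‖(f p.1 + g p.1) - (f p.2 + g p.2)‖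
      ≤ ENNReal.ofReal (‖f p.1 - f p.2‖ + ‖g p.1 - g p.2‖) := by
        refine ENNReal.ofReal_le_ofReal ?_
        rw [add_sub_add_comm]
        exact norm_add_le _ _
    _ ≤ ENNReal.ofReal ‖f p.1 - f p.2‖ + ENNReal.ofReal ‖g p.1 - g p.2‖ :=
        ENNReal.ofReal_add_le
    _ ≤ oscK m X f ε x + oscK m X g ε x := add_le_add h1 h2

lemma stmt12_osc1K_add_le [SFinite m] (hXm : MeasurableSet X) {f g : ℝ → ℂ}
    (hf : Measurable f) (ε : ℝ) :
    osc1K m X (fun y => f y + g y) ε ≤ osc1K m X f ε + osc1K m X g ε :=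
  calc osc1K m X (fun y => f y + g y) ε
      ≤ ∫⁻ x in X, (oscK m X f ε x + oscK m X g ε x) ∂m :=
        lintegral_mono fun x => stmt12_oscK_add_le f g ε x
    _ = osc1K m X f ε + osc1K m X g ε :=
        lintegral_add_left (stmt12_measurable_oscK hXm hf ε) _

lemma stmt12_kellerNorm_add_le [SFinite m] (hXm : MeasurableSet X) (A α : ℝ) {f g : ℝ → ℂ}
    (hf : Measurable f) :
    kellerNorm A α m X (fun y => f y + g y) ≤ kellerNorm A α m X f + kellerNorm A α m X g := by
  have hsemi : kellerSemi A α m X (fun y => f y + g y)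
      ≤ kellerSemi A α m X f + kellerSemi A α m X g := by
    refine iSup₂_le fun ε hε => ?_
    calc osc1K m X (fun y => f y + g y) ε / ENNReal.ofReal (ε ^ α)
        ≤ (osc1K m X f ε + osc1K m X g ε) / ENNReal.ofReal (ε ^ α) :=
          ENNReal.div_le_div_right (stmt12_osc1K_add_le hXm hf ε) _
      _ = osc1K m X f ε / ENNReal.ofReal (ε ^ α) + osc1K m X g ε / ENNReal.ofReal (ε ^ α) :=
          ENNReal.add_div
      _ ≤ kellerSemi A α m X f + kellerSemi A α m X g :=
          add_le_add (le_iSup₂_of_le ε hε le_rfl) (le_iSup₂_of_le ε hε le_rfl)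
  have hl1 : (∫⁻ x in X, ENNReal.ofReal ‖f x + g x‖ ∂m)
      ≤ (∫⁻ x in X, ENNReal.ofReal ‖f x‖ ∂m) + ∫⁻ x in X, ENNReal.ofReal ‖g x‖ ∂m := by
    calc (∫⁻ x in X, ENNReal.ofReal ‖f x + g x‖ ∂m)
        ≤ ∫⁻ x in X, (ENNReal.ofReal ‖f x‖ + ENNReal.ofReal ‖g x‖) ∂m := by
          refine lintegral_mono fun x => ?_
          exact le_trans (ENNReal.ofReal_le_ofReal (norm_add_le _ _)) ENNReal.ofReal_add_le
      _ = (∫⁻ x in X, ENNReal.ofReal ‖f x‖ ∂m) + ∫⁻ x in X, ENNReal.ofReal ‖g x‖ ∂m :=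
          lintegral_add_left (hf.norm.ennreal_ofReal) _
  unfold kellerNorm
  calc (∫⁻ x in X, ENNReal.ofReal ‖f x + g x‖ ∂m) + kellerSemi A α m X (fun y => f y + g y)
      ≤ ((∫⁻ x in X, ENNReal.ofReal ‖f x‖ ∂m) + ∫⁻ x in X, ENNReal.ofReal ‖g x‖ ∂m)
        + (kellerSemi A α m X f + kellerSemi A α m X g) := add_le_add hl1 hsemi
    _ = _ := by ring

lemma stmt12_kellerNorm_congr [SFinite m] (A α : ℝ) {f g : ℝ → ℂ}
    (h1 : ∀ x, ‖f x‖ = ‖g x‖) (h2 : ∀ x y, ‖f x - f y‖ = ‖g x - g y‖) :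
    kellerNorm A α m X f = kellerNorm A α m X g := by
  have e0 : (fun x => ENNReal.ofReal ‖f x‖) = fun x => ENNReal.ofReal ‖g x‖ :=
    funext fun x => by rw [h1]
  have e1 : (fun p : ℝ × ℝ => ENNReal.ofReal ‖f p.1 - f p.2‖)
      = fun p : ℝ × ℝ => ENNReal.ofReal ‖g p.1 - g p.2‖ :=
    funext fun p => by rw [h2]
  unfold kellerNorm kellerSemi osc1K oscK
  rw [e0, e1]

end Stmt12Aux

/-- the Keller space is a Banach space (completeness). -/
theorem statement12 (A : ℝ) (hA : 0 < A) (X : Set ℝ) (hX : IsCompact X)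
    (m : Measure ℝ) [IsProbabilityMeasure m] (hmX : m X = 1) (hatom : ∀ x, m {x} = 0)
    (α : ℝ) (hα : α ∈ Ioc (0:ℝ) 1)
    (h : ℕ → ℝ → ℂ) (hmeas : ∀ n, Measurable (h n))
    (hmem : ∀ n, MemKeller A α m X (h n))
    (hcauchy : ∀ δ : ℝ, 0 < δ → ∃ N : ℕ, ∀ p : ℕ, N ≤ p → ∀ q : ℕ, N ≤ q →
      kellerNorm A α m X (fun x => h p x - h q x) < ENNReal.ofReal δ) :
    ∃ g : ℝ → ℂ, Measurable g ∧ MemKeller A α m X g ∧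
      Tendsto (fun n : ℕ => kellerNorm A α m X (fun x => h n x - g x)) atTop (𝓝 0) := by
  have hXm : MeasurableSet X := hX.measurableSet
  have hres : m.restrict X = m := by
    refine Measure.restrict_eq_self_of_ae_mem ?_
    have hc : m Xᶜ = 0 := by
      have h1 := measure_compl hXm (measure_ne_top m X)
      rw [hmX, measure_univ] at h1
      simpa using h1
    rw [ae_iff]
    exact hc
  choose Nf hNf using fun k : ℕ => hcauchy ((1/2) ^ k) (by positivity)
  set n : ℕ → ℕ := fun k => Nat.rec (Nf 0) (fun k ih => max (ih + 1) (Nf (k + 1))) k with hn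
  have hnsucc : ∀ k, n k < n (k + 1) := fun k =>
    lt_of_lt_of_le (Nat.lt_succ_self _) (le_max_left _ _)
  have hnmono : StrictMono n := strictMono_nat_of_lt_succ hnsucc
  have hnNf : ∀ k, Nf k ≤ n k := by
    intro k
    cases k with
    | zero => exact le_rfl
    | succ k => exact le_max_right _ _
  have hd : ∀ k, kellerNorm A α m X (fun x => h (n (k+1)) x - h (n k) x)
      < ENNReal.ofReal ((1/2 : ℝ) ^ k) := fun k =>
    hNf k (n (k+1)) ((hnNf k).trans (hnsucc k).le) (n k) (hnNf k)
  have hl1_le : ∀ ψ : ℝ → ℂ,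
      (∫⁻ x in X, ENNReal.ofReal ‖ψ x‖ ∂m) ≤ kellerNorm A α m X ψ := fun ψ => by
    unfold kellerNorm; exact self_le_add_right _ _
  have hsemi_le : ∀ ψ : ℝ → ℂ, kellerSemi A α m X ψ ≤ kellerNorm A α m X ψ := fun ψ => by
    unfold kellerNorm; exact le_add_self
  have hmeasd : ∀ k, Measurable fun x => h (n (k+1)) x - h (n k) x :=
    fun k => (hmeas _).sub (hmeas _)
  have hsum : (∑' k, ∫⁻ x in X, ENNReal.ofReal ‖h (n (k+1)) x - h (n k) x‖ ∂m) ≠ ⊤ := by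
    have hpow : ∀ k : ℕ, ENNReal.ofReal ((1/2 : ℝ) ^ k) = (2⁻¹ : ℝ≥0∞) ^ k := by
      intro k
      rw [ENNReal.ofReal_pow (by norm_num)]
      congr 1
      rw [one_div, ENNReal.ofReal_inv_of_pos (by norm_num)]
      norm_num
    have hgeo : (∑' k : ℕ, ENNReal.ofReal ((1/2 : ℝ) ^ k)) ≠ ⊤ := by
      rw [tsum_congr hpow, ENNReal.tsum_geometric]
      refine ENNReal.inv_ne_top.mpr ?_
      rw [Ne, tsub_eq_zero_iff_le, not_le]
      exact ENNReal.inv_lt_one.mpr one_lt_two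
    refine ne_top_of_le_ne_top hgeo (ENNReal.tsum_le_tsum fun k => ?_)
    exact (hl1_le _).trans (hd k).le
  have haeconv : ∀ᵐ x ∂m, ∃ l : ℂ, Tendsto (fun k => h (n k) x) atTop (𝓝 l) := by
    have hint : (∫⁻ x in X, ∑' k, ENNReal.ofReal ‖h (n (k+1)) x - h (n k) x‖ ∂m) ≠ ⊤ := by
      rw [lintegral_tsum fun k => ((hmeasd k).norm.ennreal_ofReal).aemeasurable]
      exact hsum
    have hae1 : ∀ᵐ x ∂(m.restrict X),
        (∑' k, ENNReal.ofReal ‖h (n (k+1)) x - h (n k) x‖) < ⊤ :=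
      ae_lt_top (Measurable.ennreal_tsum fun k => (hmeasd k).norm.ennreal_ofReal) hint
    rw [hres] at hae1
    filter_upwards [hae1] with x hx
    have hsummable : Summable fun k => ‖h (n (k+1)) x - h (n k) x‖ := by
      have h2 : (∑' k, (‖h (n (k+1)) x - h (n k) x‖₊ : ℝ≥0∞)) ≠ ⊤ := by
        simpa only [ofReal_norm, enorm_eq_nnnorm] using hx.ne
      simpa [coe_nnnorm] using
        NNReal.summable_coe.mpr (ENNReal.tsum_coe_ne_top_iff_summable.mp h2)
    have hcau : CauchySeq fun k => h (n k) x := by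
      refine cauchySeq_of_summable_dist ?_
      have heq : (fun k => dist (h (n k) x) (h (n (k+1)) x))
          = fun k => ‖h (n (k+1)) x - h (n k) x‖ := by
        funext k; rw [dist_eq_norm, norm_sub_rev]
      rw [heq]; exact hsummable
    exact cauchySeq_tendsto_of_complete hcau
  obtain ⟨g, hgmeas, hgt⟩ := measurable_limit_of_tendsto_metrizable_ae
    (fun k => (hmeas (n k)).aemeasurable) haeconv
  have key : ∀ δ : ℝ, 0 < δ → ∀ N : ℕ,
      (∀ p : ℕ, N ≤ p → ∀ q : ℕ, N ≤ q →
        kellerNorm A α m X (fun x => h p x - h q x) < ENNReal.ofReal δ) →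
      ∀ p : ℕ, N ≤ p →
        kellerNorm A α m X (fun x => h p x - g x) ≤ ENNReal.ofReal δ + ENNReal.ofReal δ := by
    intro δ hδ N hN p hp
    have haep : ∀ᵐ x ∂m, Tendsto (fun k => h p x - h (n k) x) atTop (𝓝 (h p x - g x)) := by
      filter_upwards [hgt] with x hx
      exact tendsto_const_nhds.sub hx
    have humeas : ∀ k, Measurable fun x => h p x - h (n k) x :=
      fun k => (hmeas p).sub (hmeas (n k))
    have hev : ∀ᶠ k in atTop,
        kellerNorm A α m X (fun x => h p x - h (n k) x) ≤ ENNReal.ofReal δ := by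
      filter_upwards [Filter.eventually_ge_atTop N] with k hk
      exact (hN p hp (n k) (hk.trans hnmono.le_apply)).le
    have hbound1 : (∫⁻ x in X, ENNReal.ofReal ‖h p x - g x‖ ∂m) ≤ ENNReal.ofReal δ := by
      refine (stmt12_l1_le_liminf humeas haep).trans ?_
      exact liminf_le_of_frequently_le'
        ((hev.mono fun k hk => (hl1_le _).trans hk).frequently)
    have hbound2 : kellerSemi A α m X (fun x => h p x - g x) ≤ ENNReal.ofReal δ := by
      refine (stmt12_kellerSemi_le_liminf hXm A α humeas haep).trans ?_
      exact liminf_le_of_frequently_le'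
        ((hev.mono fun k hk => (hsemi_le _).trans hk).frequently)
    calc kellerNorm A α m X (fun x => h p x - g x)
        = (∫⁻ x in X, ENNReal.ofReal ‖h p x - g x‖ ∂m)
          + kellerSemi A α m X (fun x => h p x - g x) := rfl
      _ ≤ ENNReal.ofReal δ + ENNReal.ofReal δ := add_le_add hbound1 hbound2
  refine ⟨g, hgmeas, ?_, ?_⟩
  · obtain ⟨N₁, hN₁⟩ := hcauchy 1 one_pos
    have hk1 : kellerNorm A α m X (fun x => h N₁ x - g x)
        ≤ ENNReal.ofReal 1 + ENNReal.ofReal 1 := key 1 one_pos N₁ hN₁ N₁ le_rfl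
    have hsymm : kellerNorm A α m X (fun x => g x - h N₁ x)
        = kellerNorm A α m X (fun x => h N₁ x - g x) := by
      refine stmt12_kellerNorm_congr A α (fun x => norm_sub_rev _ _) fun x y => ?_
      rw [show (g x - h N₁ x) - (g y - h N₁ y) = -((h N₁ x - g x) - (h N₁ y - g y)) by ring,
        norm_neg]
    have hfun : (fun x => (g x - h N₁ x) + h N₁ x) = g := by
      funext x; ring
    have hrepr := congrArg (kellerNorm A α m X) hfun
    show kellerNorm A α m X g ≠ ⊤
    rw [← hrepr]
    refine ne_top_of_le_ne_top ?_
      (stmt12_kellerNorm_add_le (g := h N₁) hXm A α (hgmeas.sub (hmeas N₁)))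
    rw [hsymm]
    exact ENNReal.add_ne_top.mpr ⟨ne_top_of_le_ne_top (by simp) hk1, hmem N₁⟩
  · rw [ENNReal.tendsto_atTop_zero]
    intro ε hε
    obtain ⟨δ, hδpos, hδε⟩ : ∃ δ : ℝ, 0 < δ ∧ ENNReal.ofReal δ + ENNReal.ofReal δ ≤ ε := by
      rcases eq_or_ne ε ⊤ with rfl | hεtop
      · exact ⟨1, one_pos, le_top⟩
      · have h0 : 0 < ε.toReal := ENNReal.toReal_pos hε.ne' hεtop
        refine ⟨ε.toReal / 2, by positivity, ?_⟩
        rw [← ENNReal.ofReal_add (by positivity) (by positivity), add_halves,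
          ENNReal.ofReal_toReal hεtop]
    obtain ⟨N, hN⟩ := hcauchy δ hδpos
    exact ⟨N, fun p hp => (key δ hδpos N hN p hp).trans hδε⟩
end
end

section
/- Fix A > 0, let X be a compact subset of ℝ, let m be an atom-free Borel probability measure on X, and let α ∈ (0,1]. Then there is a constant C* > 0 such that every element h of the Keller space H^{α,1}(m) is essentially bounded and satisfies ‖h‖_{L^∞(m)} ≤ C* ‖h‖_{α,1}. -/
open MeasureTheory Filter Set Topology ENNReal NNReal

noncomputable section

section AuxStatement14

open MeasureTheory Set ENNReal

variable {m : Measure ℝ}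

/-- The CDF of `m`. -/
noncomputable def cdfF (m : Measure ℝ) (x : ℝ) : ℝ := (m (Set.Iic x)).toReal

lemma cdfF_mono [IsProbabilityMeasure m] : Monotone (cdfF m) := fun a b hab =>
  ENNReal.toReal_mono (measure_ne_top m _) (measure_mono (Set.Iic_subset_Iic.2 hab))

lemma cdfF_nonneg (x : ℝ) : 0 ≤ cdfF m x := ENNReal.toReal_nonneg

lemma cdfF_le_one [IsProbabilityMeasure m] (x : ℝ) : cdfF m x ≤ 1 := by
  have : m (Set.Iic x) ≤ 1 := prob_le_one
  simpa [cdfF] using ENNReal.toReal_mono (by simp) this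

lemma meas_Iic_eq [IsProbabilityMeasure m] (x : ℝ) :
    m (Set.Iic x) = ENNReal.ofReal (cdfF m x) :=
  (ENNReal.ofReal_toReal (measure_ne_top m _)).symm

lemma meas_Iio_eq (hatom : ∀ x, m {x} = 0) (x : ℝ) : m (Set.Iio x) = m (Set.Iic x) := by
  refine le_antisymm (measure_mono Set.Iio_subset_Iic_self) ?_
  have h1 : Set.Iic x ⊆ Set.Iio x ∪ {x} := by
    intro z hz
    rcases lt_or_eq_of_le (Set.mem_Iic.1 hz) with h | h
    · exact Or.inl h
    · exact Or.inr h
  calc m (Set.Iic x) ≤ m (Set.Iio x ∪ {x}) := measure_mono h1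
    _ ≤ m (Set.Iio x) + m {x} := measure_union_le _ _
    _ = m (Set.Iio x) := by rw [hatom]; simp

/-- Lower bound for the measure of bands of the CDF. -/
lemma band_lower [IsProbabilityMeasure m] (hatom : ∀ x, m {x} = 0)
    {c r : ℝ} (hc0 : 0 ≤ c) (hc1 : c ≤ 1) (hr : 0 < r) (hr2 : r ≤ 1/2) :
    ENNReal.ofReal r ≤ m {y | |cdfF m y - c| < r} := by
  set F := cdfF m with hF
  set L := {y : ℝ | F y ≤ c - r} with hLdef
  set U := {y : ℝ | c + r ≤ F y} with hUdef
  have hLord : L.OrdConnected := by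
    constructor
    intro y hy z hz w hw
    exact le_trans (cdfF_mono hw.2) hz
  have hUord : U.OrdConnected := by
    constructor
    intro y hy z hz w hw
    exact le_trans hy (cdfF_mono hw.1)
  have hLmeas : MeasurableSet L := hLord.measurableSet
  have hUmeas : MeasurableSet U := hUord.measurableSet
  have hL : m L ≤ ENNReal.ofReal (c - r) := by
    rcases Set.eq_empty_or_nonempty L with hne | hne
    · simp [hne]
    by_cases hbdd : BddAbove L
    · set b := sSup L with hb
      have hlt : ∀ y : ℝ, y < b → F y ≤ c - r := by
        intro y hy
        obtain ⟨y', hy'L, hyy'⟩ := exists_lt_of_lt_csSup hne hy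
        exact le_trans (cdfF_mono hyy'.le) hy'L
      have hsub : L ⊆ Set.Iic b := fun y hy => le_csSup hbdd hy
      have hIio : Set.Iio b = ⋃ n : ℕ, Set.Iic (b - 1/(n+1)) := by
        ext z
        simp only [Set.mem_Iio, Set.mem_iUnion, Set.mem_Iic]
        constructor
        · intro hz
          obtain ⟨n, hn⟩ := exists_nat_one_div_lt (sub_pos.2 hz)
          exact ⟨n, by push_cast at hn ⊢; linarith⟩
        · rintro ⟨n, hn⟩
          have : (0:ℝ) < 1/(n+1) := by positivity
          linarith
      have hmono : Monotone (fun n : ℕ => Set.Iic (b - 1/((n:ℝ)+1))) := by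
        intro n k hnk
        apply Set.Iic_subset_Iic.2
        have h1 : (1:ℝ)/((k:ℝ)+1) ≤ 1/((n:ℝ)+1) := by
          apply one_div_le_one_div_of_le
          · positivity
          · push_cast; exact_mod_cast by exact_mod_cast add_le_add_left (Nat.cast_le.2 hnk) 1
        linarith
      calc m L ≤ m (Set.Iic b) := measure_mono hsub
        _ = m (Set.Iio b) := (meas_Iio_eq hatom b).symm
        _ = ⨆ n : ℕ, m (Set.Iic (b - 1/((n:ℝ)+1))) := by
            rw [hIio]; exact hmono.measure_iUnion
        _ ≤ ENNReal.ofReal (c - r) := by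
            apply iSup_le
            intro n
            rw [meas_Iic_eq]
            apply ENNReal.ofReal_le_ofReal
            apply hlt
            have : (0:ℝ) < 1/((n:ℝ)+1) := by positivity
            linarith
    · exfalso
      have hall : ∀ y : ℝ, F y ≤ c - r := by
        intro y
        obtain ⟨y', hy'L, hy'⟩ := not_bddAbove_iff.1 hbdd y
        exact le_trans (cdfF_mono hy'.le) hy'L
      have huniv : (Set.univ : Set ℝ) = ⋃ n : ℕ, Set.Iic (n:ℝ) := by
        ext z
        simp only [Set.mem_univ, Set.mem_iUnion, Set.mem_Iic, true_iff]
        exact exists_nat_ge z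
      have hmono : Monotone (fun n : ℕ => Set.Iic ((n:ℝ))) := by
        intro n k hnk
        exact Set.Iic_subset_Iic.2 (by exact_mod_cast hnk)
      have h1 : (1:ℝ≥0∞) ≤ ENNReal.ofReal (c - r) := by
        calc (1:ℝ≥0∞) = m Set.univ := measure_univ.symm
          _ = ⨆ n : ℕ, m (Set.Iic ((n:ℝ))) := by rw [huniv]; exact hmono.measure_iUnion
          _ ≤ ENNReal.ofReal (c - r) := by
              apply iSup_le
              intro n
              rw [meas_Iic_eq]
              exact ENNReal.ofReal_le_ofReal (hall _)
      have h2 : ENNReal.ofReal (c - r) < 1 := ENNReal.ofReal_lt_one.2 (by linarith)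
      exact absurd (h1.trans_lt h2) (lt_irrefl _)
  have hU : m U ≤ ENNReal.ofReal (1 - (c + r)) := by
    rcases Set.eq_empty_or_nonempty U with hne | hne
    · simp [hne]
    by_cases hbdd : BddBelow U
    · set a := sInf U with ha
      have hgt : ∀ y : ℝ, a < y → ENNReal.ofReal (c + r) ≤ m (Set.Iic y) := by
        intro y hy
        obtain ⟨y', hy'U, hy'⟩ := exists_lt_of_csInf_lt hne hy
        have h1 : c + r ≤ F y := le_trans hy'U (cdfF_mono hy'.le)
        rw [meas_Iic_eq]
        exact ENNReal.ofReal_le_ofReal h1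
      have hIica : ENNReal.ofReal (c + r) ≤ m (Set.Iic a) := by
        have hInt : Set.Iic a = ⋂ n : ℕ, Set.Iic (a + 1/((n:ℝ)+1)) := by
          ext z
          simp only [Set.mem_Iic, Set.mem_iInter]
          constructor
          · intro hz n
            have : (0:ℝ) < 1/((n:ℝ)+1) := by positivity
            linarith
          · intro hz
            by_contra hlt
            push_neg at hlt
            obtain ⟨n, hn⟩ := exists_nat_one_div_lt (sub_pos.2 hlt)
            have := hz n
            push_cast at hn this
            linarith
        have hanti : Antitone (fun n : ℕ => Set.Iic (a + 1/((n:ℝ)+1))) := by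
          intro n k hnk
          apply Set.Iic_subset_Iic.2
          have h1 : (1:ℝ)/((k:ℝ)+1) ≤ 1/((n:ℝ)+1) := by
            apply one_div_le_one_div_of_le
            · positivity
            · exact_mod_cast add_le_add_left (Nat.cast_le.2 hnk) 1
          linarith
        have htend := tendsto_measure_iInter_atTop
          (fun n => measurableSet_Iic.nullMeasurableSet) hanti ⟨0, measure_ne_top m _⟩
        rw [← hInt] at htend
        refine ge_of_tendsto htend (Filter.Eventually.of_forall fun n => ?_)
        apply hgt
        have : (0:ℝ) < 1/((n:ℝ)+1) := by positivity
        linarith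
      calc m U ≤ m (Set.Ici a) := measure_mono (fun y hy => csInf_le hbdd hy)
        _ = m Set.univ - m (Set.Iio a) := by
            rw [← Set.compl_Iio, measure_compl measurableSet_Iio (measure_ne_top m _)]
        _ = 1 - m (Set.Iic a) := by rw [measure_univ, meas_Iio_eq hatom]
        _ ≤ 1 - ENNReal.ofReal (c + r) := tsub_le_tsub_left hIica 1
        _ = ENNReal.ofReal (1 - (c + r)) := by
            rw [← ENNReal.ofReal_one, ← ENNReal.ofReal_sub _ (by positivity)]
    · exfalso
      have hall : ∀ y : ℝ, ENNReal.ofReal (c + r) ≤ m (Set.Iic y) := by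
        intro y
        obtain ⟨y', hy'U, hy'⟩ := not_bddBelow_iff.1 hbdd y
        have h1 : c + r ≤ F y := le_trans hy'U (cdfF_mono hy'.le)
        rw [meas_Iic_eq]
        exact ENNReal.ofReal_le_ofReal h1
      have hempty : (⋂ n : ℕ, Set.Iic (-(n:ℝ))) = ∅ := by
        ext z
        simp only [Set.mem_iInter, Set.mem_Iic, Set.mem_empty_iff_false, iff_false, not_forall,
          not_le]
        obtain ⟨n, hn⟩ := exists_nat_gt (-z)
        exact ⟨n, by linarith⟩
      have hanti : Antitone (fun n : ℕ => Set.Iic (-(n:ℝ))) := by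
        intro n k hnk
        apply Set.Iic_subset_Iic.2
        simp only [neg_le_neg_iff]
        exact_mod_cast hnk
      have htend := tendsto_measure_iInter_atTop
        (fun n : ℕ => measurableSet_Iic.nullMeasurableSet) hanti ⟨0, measure_ne_top m _⟩
      rw [hempty] at htend
      simp only [measure_empty] at htend
      have h0 : ENNReal.ofReal (c + r) ≤ 0 :=
        ge_of_tendsto htend (Filter.Eventually.of_forall fun n => hall _)
      have h1 : (0:ℝ≥0∞) < ENNReal.ofReal (c + r) := ENNReal.ofReal_pos.2 (by positivity)
      exact absurd (h1.trans_le h0) (lt_irrefl _)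
  have hJc : {y : ℝ | |F y - c| < r}ᶜ = L ∪ U := by
    ext y
    simp only [Set.mem_compl_iff, Set.mem_setOf_eq, not_lt, Set.mem_union, hLdef, hUdef]
    rw [le_abs]
    constructor
    · rintro (h | h)
      · exact Or.inr (by linarith)
      · exact Or.inl (by linarith)
    · rintro (h | h)
      · exact Or.inr (by linarith)
      · exact Or.inl (by linarith)
  have hsum : m (L ∪ U) ≤ ENNReal.ofReal (1 - r) := by
    refine (measure_union_le L U).trans ?_
    refine (add_le_add hL hU).trans ?_
    rcases le_or_gt (c - r) 0 with hcr | hcr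
    · rw [ENNReal.ofReal_eq_zero.2 hcr, zero_add]
      exact ENNReal.ofReal_le_ofReal (by linarith)
    rcases le_or_gt (1 - (c + r)) 0 with hcu | hcu
    · rw [ENNReal.ofReal_eq_zero.2 hcu, add_zero]
      exact ENNReal.ofReal_le_ofReal (by linarith)
    rw [← ENNReal.ofReal_add (by linarith) (by linarith)]
    exact ENNReal.ofReal_le_ofReal (by linarith)
  have hcompl : m ((L ∪ U)ᶜ) = 1 - m (L ∪ U) := by
    rw [measure_compl (hLmeas.union hUmeas) (measure_ne_top m _), measure_univ]
  have hJ : {y : ℝ | |F y - c| < r} = (L ∪ U)ᶜ := by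
    rw [← hJc, compl_compl]
  rw [hJ, hcompl]
  calc ENNReal.ofReal r = 1 - ENNReal.ofReal (1 - r) := by
        rw [← ENNReal.ofReal_one, ← ENNReal.ofReal_sub _ (by linarith)]
        norm_num
    _ ≤ 1 - m (L ∪ U) := tsub_le_tsub_left hsum 1

/-- The band sets are measurable. -/
lemma band_measurable [IsProbabilityMeasure m] {c r : ℝ} :
    MeasurableSet {y : ℝ | |cdfF m y - c| < r} := by
  have : ({y : ℝ | |cdfF m y - c| < r} : Set ℝ).OrdConnected := by
    constructor
    intro y hy z hz w hw
    simp only [Set.mem_setOf_eq, abs_lt] at *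
    have h1 := cdfF_mono (m := m) hw.1
    have h2 := cdfF_mono (m := m) hw.2
    constructor <;> linarith [hy.1, hy.2, hz.1, hz.2]
  exact this.measurableSet

/-- `pdist` is controlled by the CDF. -/
lemma pdist_le_cdf [IsProbabilityMeasure m] (hatom : ∀ x, m {x} = 0) (X : Set ℝ) (x y : ℝ) :
    pdist m X x y ≤ ENNReal.ofReal |cdfF m x - cdfF m y| := by
  have key : ∀ u v : ℝ, u ≤ v → pdist m X u v ≤ ENNReal.ofReal |cdfF m u - cdfF m v| := by
    intro u v huv
    have hsub : {z | z ∈ X ∧ ((u ≤ z ∧ z ≤ v) ∨ (v ≤ z ∧ z ≤ u))} ⊆ Set.Icc u v := by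
      rintro z ⟨_, (⟨h1, h2⟩ | ⟨h1, h2⟩)⟩
      · exact ⟨h1, h2⟩
      · exact ⟨by linarith, by linarith⟩
    have hIcc : Set.Icc u v = Set.Iic v \ Set.Iio u := by
      ext z
      simp only [Set.mem_Icc, Set.mem_diff, Set.mem_Iic, Set.mem_Iio, not_lt]
      tauto
    calc pdist m X u v ≤ m (Set.Icc u v) := measure_mono hsub
      _ = m (Set.Iic v) - m (Set.Iio u) := by
          rw [hIcc]
          exact measure_diff (fun z hz => le_trans hz.le huv) measurableSet_Iio.nullMeasurableSet
            (measure_ne_top m _)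
      _ = ENNReal.ofReal (cdfF m v) - ENNReal.ofReal (cdfF m u) := by
          rw [meas_Iio_eq hatom, meas_Iic_eq, meas_Iic_eq]
      _ = ENNReal.ofReal (cdfF m v - cdfF m u) := (ENNReal.ofReal_sub _ (cdfF_nonneg u)).symm
      _ ≤ ENNReal.ofReal |cdfF m u - cdfF m v| := by
          apply ENNReal.ofReal_le_ofReal
          rw [abs_sub_comm]
          exact le_abs_self _
  rcases le_total x y with hxy | hxy
  · exact key x y hxy
  · have h1 := key y x hxy
    have h2 : pdist m X x y = pdist m X y x := by
      unfold pdist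
      congr 1
      ext z
      simp only [Set.mem_setOf_eq]
      tauto
    rw [h2, abs_sub_comm]
    exact h1

lemma dBall_subset {X : Set ℝ} {x : ℝ} {ε : ℝ} : dBall m X x ε ⊆ X := fun _ hy => hy.1

/-- `dBall`s are measurable. -/
lemma dBall_measurable {X : Set ℝ} (hXmeas : MeasurableSet X) (x ε : ℝ) :
    MeasurableSet (dBall m X x ε) := by
  have hdecomp : dBall m X x ε = X ∩
      ({y | x ≤ y ∧ pdist m X x y < ENNReal.ofReal ε} ∪
       {y | y ≤ x ∧ pdist m X x y < ENNReal.ofReal ε}) := by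
    ext y
    constructor
    · rintro ⟨hyX, hylt⟩
      refine ⟨hyX, ?_⟩
      rcases le_total x y with hc | hc
      · exact Or.inl ⟨hc, hylt⟩
      · exact Or.inr ⟨hc, hylt⟩
    · rintro ⟨hyX, (⟨_, hlt⟩ | ⟨_, hlt⟩)⟩ <;> exact ⟨hyX, hlt⟩
  have hmono1 : ({y | x ≤ y ∧ pdist m X x y < ENNReal.ofReal ε} : Set ℝ).OrdConnected := by
    constructor
    rintro y ⟨hy1, _⟩ z ⟨hz1, hz2⟩ w hw
    refine ⟨le_trans hy1 hw.1, lt_of_le_of_lt ?_ hz2⟩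
    apply measure_mono
    rintro v ⟨hvX, (⟨h1, h2⟩ | ⟨h1, h2⟩)⟩
    · exact ⟨hvX, Or.inl ⟨h1, by linarith [hw.2]⟩⟩
    · exact ⟨hvX, Or.inl ⟨by linarith [hw.1, hy1], by linarith [hw.1, hw.2, hy1]⟩⟩
  have hmono2 : ({y | y ≤ x ∧ pdist m X x y < ENNReal.ofReal ε} : Set ℝ).OrdConnected := by
    constructor
    rintro y ⟨hy1, hy2⟩ z ⟨hz1, _⟩ w hw
    refine ⟨le_trans hw.2 hz1, lt_of_le_of_lt ?_ hy2⟩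
    apply measure_mono
    rintro v ⟨hvX, (⟨h1, h2⟩ | ⟨h1, h2⟩)⟩
    · exact ⟨hvX, Or.inr ⟨by linarith [hw.1, hw.2, hz1], by linarith [hw.1, hw.2, hz1]⟩⟩
    · exact ⟨hvX, Or.inr ⟨by linarith [hw.1], h2⟩⟩
  rw [hdecomp]
  exact hXmeas.inter (hmono1.measurableSet.union hmono2.measurableSet)

/-- Lower bound for the measure of `dBall`s. -/
lemma dBall_lower [IsProbabilityMeasure m] (hatom : ∀ x, m {x} = 0) {X : Set ℝ}
    (hXc0 : m Xᶜ = 0) {ε : ℝ} (hε : 0 < ε) (hε1 : ε ≤ 1) (x : ℝ) :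
    ENNReal.ofReal (ε/2) ≤ m (dBall m X x ε) := by
  have hband := band_lower (m := m) hatom (cdfF_nonneg (m := m) x) (cdfF_le_one (m := m) x)
    (by linarith : (0:ℝ) < ε/2) (by linarith)
  have hsub : {y | |cdfF m y - cdfF m x| < ε/2} ∩ X ⊆ dBall m X x ε := by
    rintro y ⟨hy1, hy2⟩
    refine ⟨hy2, lt_of_le_of_lt (pdist_le_cdf hatom X x y) ?_⟩
    rw [ENNReal.ofReal_lt_ofReal_iff hε]
    rw [Set.mem_setOf_eq, abs_sub_comm] at hy1
    linarith
  set T := {y | |cdfF m y - cdfF m x| < ε/2} with hT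
  have hsplit : m T ≤ m (T ∩ X) := by
    calc m T = m ((T ∩ X) ∪ (T ∩ Xᶜ)) := by rw [Set.inter_union_compl]
      _ ≤ m (T ∩ X) + m (T ∩ Xᶜ) := measure_union_le _ _
      _ ≤ m (T ∩ X) + m Xᶜ := by gcongr; exact Set.inter_subset_right
      _ = m (T ∩ X) := by rw [hXc0, add_zero]
  exact hband.trans (hsplit.trans (measure_mono hsub))

/-- Bound on `‖h‖` at a.e. point of a `dBall`, in terms of `oscK` at the center. -/
lemma center_bound [IsProbabilityMeasure m] {X : Set ℝ} {h : ℝ → ℂ} {ε : ℝ} {x : ℝ}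
    (hε : 0 < ε) (hB : ENNReal.ofReal (ε/2) ≤ m (dBall m X x ε)) :
    ∀ᵐ y ∂(m.restrict (dBall m X x ε)), ENNReal.ofReal ‖h y‖ ≤
      oscK m X h ε x + (∫⁻ z in X, ENNReal.ofReal ‖h z‖ ∂m) / ENNReal.ofReal (ε/2) := by
  set B := dBall m X x ε with hBdef
  set O := oscK m X h ε x with hO
  set L0 := ∫⁻ z in X, ENNReal.ofReal ‖h z‖ ∂m with hL0
  have hBX : B ⊆ X := dBall_subset
  have hmB0 : m B ≠ 0 := by
    intro h0
    rw [h0, nonpos_iff_eq_zero, ENNReal.ofReal_eq_zero] at hB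
    linarith
  have hmBt : m B ≠ ∞ := measure_ne_top m B
  have hhalf0 : ENNReal.ofReal (ε/2) ≠ 0 := (ENNReal.ofReal_pos.2 (by linarith)).ne'
  have hhalft : ENNReal.ofReal (ε/2) ≠ ∞ := ENNReal.ofReal_ne_top
  have hae : ∀ᵐ p ∂((m.restrict B).prod (m.restrict B)),
      ENNReal.ofReal ‖h p.1 - h p.2‖ ≤ O := by
    rw [Measure.prod_restrict]
    exact ENNReal.ae_le_essSup _
  filter_upwards [Measure.ae_ae_of_ae_prod hae] with y1 hy1
  have key : m B * ENNReal.ofReal ‖h y1‖ ≤ m B * O + L0 := by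
    have hstep : ∫⁻ _ in B, ENNReal.ofReal ‖h y1‖ ∂m ≤
        ∫⁻ y2 in B, (O + ENNReal.ofReal ‖h y2‖) ∂m := by
      apply lintegral_mono_ae
      filter_upwards [hy1] with y2 hy2
      calc ENNReal.ofReal ‖h y1‖ ≤ ENNReal.ofReal (‖h y1 - h y2‖ + ‖h y2‖) := by
            apply ENNReal.ofReal_le_ofReal
            calc ‖h y1‖ = ‖(h y1 - h y2) + h y2‖ := by ring_nf
              _ ≤ ‖h y1 - h y2‖ + ‖h y2‖ := norm_add_le _ _
        _ = ENNReal.ofReal ‖h y1 - h y2‖ + ENNReal.ofReal ‖h y2‖ :=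
            ENNReal.ofReal_add (norm_nonneg _) (norm_nonneg _)
        _ ≤ O + ENNReal.ofReal ‖h y2‖ := add_le_add_left hy2 _
    rw [setLIntegral_const, lintegral_add_left measurable_const] at hstep
    rw [setLIntegral_const] at hstep
    calc m B * ENNReal.ofReal ‖h y1‖ = ENNReal.ofReal ‖h y1‖ * m B := mul_comm _ _
      _ ≤ O * m B + ∫⁻ y2 in B, ENNReal.ofReal ‖h y2‖ ∂m := hstep
      _ ≤ m B * O + L0 := by
          refine add_le_add (le_of_eq (mul_comm _ _)) ?_
          exact lintegral_mono' (Measure.restrict_mono hBX le_rfl) le_rfl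
  have h3 : m B * ENNReal.ofReal ‖h y1‖ ≤ m B * (O + L0 / ENNReal.ofReal (ε/2)) := by
    rw [mul_add]
    refine key.trans (add_le_add_right ?_ _)
    calc L0 = ENNReal.ofReal (ε/2) * (L0 / ENNReal.ofReal (ε/2)) :=
          (ENNReal.mul_div_cancel hhalf0 hhalft).symm
      _ ≤ m B * (L0 / ENNReal.ofReal (ε/2)) := mul_le_mul_left hB _
  exact (ENNReal.mul_le_mul_iff_right hmB0 hmBt).1 h3

end AuxStatement14

/-- elements of the Keller space are essentially bounded. -/
theorem statement14 (A : ℝ) (hA : 0 < A) (X : Set ℝ) (hX : IsCompact X)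
    (m : Measure ℝ) [IsProbabilityMeasure m] (hmX : m X = 1) (hatom : ∀ x, m {x} = 0)
    (α : ℝ) (hα : α ∈ Ioc (0:ℝ) 1) :
    ∃ C : ℝ, 0 < C ∧ ∀ h : ℝ → ℂ, MemKeller A α m X h →
      essSup (fun x => ENNReal.ofReal ‖h x‖) (m.restrict X) ≤
        ENNReal.ofReal C * kellerNorm A α m X h := by
  obtain ⟨hα0, hα1⟩ := hα
  set ε := min A 1 with hεdef
  have hε : 0 < ε := lt_min hA one_pos
  have hε1 : ε ≤ 1 := min_le_right _ _
  have hεA : ε ≤ A := min_le_left _ _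
  refine ⟨8/ε, by positivity, fun h hmem => ?_⟩
  have hXmeas : MeasurableSet X := hX.isClosed.measurableSet
  have hXc0 : m Xᶜ = 0 := by
    rw [measure_compl hXmeas (measure_ne_top m X), hmX, measure_univ, tsub_self]
  set F := cdfF m with hF
  set L0 := ∫⁻ z in X, ENNReal.ofReal ‖h z‖ ∂m with hL0
  set semi := kellerSemi A α m X h with hsemi
  set K := kellerNorm A α m X h with hK
  have hKtop : K ≠ ⊤ := hmem
  have hL0K : L0 ≤ K := le_self_add
  have hsemiK : semi ≤ K := le_add_self
  set I := osc1K m X h ε with hIdef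
  have hI : I ≤ semi := by
    have h1 : I / ENNReal.ofReal (ε ^ α) ≤ semi := by
      rw [hsemi]
      unfold kellerSemi
      exact le_iSup₂ (f := fun ε' (_ : ε' ∈ Ioc (0:ℝ) A) =>
        osc1K m X h ε' / ENNReal.ofReal (ε' ^ α)) ε ⟨hε, hεA⟩
    refine le_trans ?_ h1
    rw [ENNReal.le_div_iff_mul_le (Or.inl (ENNReal.ofReal_pos.2 (Real.rpow_pos_of_pos hε α)).ne')
      (Or.inl ENNReal.ofReal_ne_top)]
    calc I * ENNReal.ofReal (ε ^ α) ≤ I * 1 :=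
          mul_le_mul_right (ENNReal.ofReal_le_one.2 (Real.rpow_le_one hε.le hε1 hα0.le)) I
      _ = I := mul_one I
  have hIne : I ≠ ⊤ := (hI.trans_lt (hsemiK.trans_lt hKtop.lt_top)).ne
  apply ENNReal.le_of_forall_pos_le_add
  intro κ hκ _
  set t : ℝ≥0∞ := I / ENNReal.ofReal (ε/8) + κ with ht
  set S : ℝ≥0∞ := t + L0 / ENNReal.ofReal (ε/2) with hS
  have h8 : ENNReal.ofReal (ε/8) ≠ 0 := (ENNReal.ofReal_pos.2 (by linarith)).ne'
  have h8t : ENNReal.ofReal (ε/8) ≠ ⊤ := ENNReal.ofReal_ne_top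
  -- existence of good centers
  have hgood : ∀ c ∈ Icc (0:ℝ) 1, ∃ x, x ∈ X ∧ |F x - c| < ε/4 ∧ oscK m X h ε x ≤ t := by
    intro c hc
    by_contra hcon
    push_neg at hcon
    set S' := {y | |F y - c| < ε/4} ∩ X with hS'
    have hS'meas : MeasurableSet S' := band_measurable.inter hXmeas
    have hS'm : ENNReal.ofReal (ε/4) ≤ m S' := by
      have hband := band_lower (m := m) hatom hc.1 hc.2 (by linarith : (0:ℝ) < ε/4)
        (by linarith)
      refine hband.trans ?_
      calc m {y | |F y - c| < ε/4}
          = m (S' ∪ ({y | |F y - c| < ε/4} ∩ Xᶜ)) := by rw [hS', Set.inter_union_compl]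
        _ ≤ m S' + m ({y | |F y - c| < ε/4} ∩ Xᶜ) := measure_union_le _ _
        _ ≤ m S' + m Xᶜ := by gcongr; exact Set.inter_subset_right
        _ = m S' := by rw [hXc0, add_zero]
    have hkey : t * ENNReal.ofReal (ε/4) ≤ I := by
      calc t * ENNReal.ofReal (ε/4) ≤ t * m S' := mul_le_mul_right hS'm t
        _ = ∫⁻ _ in S', t ∂m := (setLIntegral_const _ _).symm
        _ ≤ ∫⁻ y in S', oscK m X h ε y ∂m := by
            apply lintegral_mono_ae
            filter_upwards [ae_restrict_mem hS'meas] with y hy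
            exact (hcon y hy.2 hy.1).le
        _ ≤ ∫⁻ y in X, oscK m X h ε y ∂m :=
            lintegral_mono' (Measure.restrict_mono Set.inter_subset_right le_rfl) le_rfl
        _ = I := rfl
    have hge : I + (κ : ℝ≥0∞) * ENNReal.ofReal (ε/4) ≤ I := by
      calc I + (κ : ℝ≥0∞) * ENNReal.ofReal (ε/4)
          = I / ENNReal.ofReal (ε/8) * ENNReal.ofReal (ε/8) + (κ:ℝ≥0∞) * ENNReal.ofReal (ε/4) := by
            rw [ENNReal.div_mul_cancel h8 h8t]
        _ ≤ I / ENNReal.ofReal (ε/8) * ENNReal.ofReal (ε/4) + (κ:ℝ≥0∞) * ENNReal.ofReal (ε/4) := by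
            gcongr
            norm_num
        _ = t * ENNReal.ofReal (ε/4) := by rw [ht, add_mul]
        _ ≤ I := hkey
    have hlt : I < I + (κ : ℝ≥0∞) * ENNReal.ofReal (ε/4) := by
      apply ENNReal.lt_add_right hIne
      apply mul_ne_zero
      · exact_mod_cast hκ.ne'
      · exact (ENNReal.ofReal_pos.2 (by linarith)).ne'
    exact absurd (hlt.trans_le hge) (lt_irrefl _)
  choose! xc hxcX hxcF hxcO using hgood
  set cj : ℕ → ℝ := fun j => min ((j:ℝ)*(ε/8)) 1 with hcj
  have hcjmem : ∀ j : ℕ, cj j ∈ Icc (0:ℝ) 1 := by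
    intro j
    constructor
    · apply le_min (by positivity) (by norm_num)
    · exact min_le_right _ _
  -- each ball gives a null bad set
  have hnull : ∀ j : ℕ, m ({y | ¬ (ENNReal.ofReal ‖h y‖ ≤ S)} ∩ dBall m X (xc (cj j)) ε) = 0 := by
    intro j
    have hball := dBall_lower hatom hXc0 hε hε1 (xc (cj j))
    have hcb := center_bound (h := h) hε hball
    have hae2 : ∀ᵐ y ∂(m.restrict (dBall m X (xc (cj j)) ε)), ENNReal.ofReal ‖h y‖ ≤ S := by
      filter_upwards [hcb] with y hy
      refine hy.trans ?_
      rw [hS]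
      exact add_le_add_left (hxcO _ (hcjmem j)) _
    have h0 := hae2
    rw [Filter.eventually_iff, mem_ae_iff] at h0
    rw [Measure.restrict_apply' (dBall_measurable hXmeas _ _)] at h0
    simpa [Set.compl_setOf] using h0
  -- covering
  have hcover : ∀ y ∈ X, ∃ j : ℕ, y ∈ dBall m X (xc (cj j)) ε := by
    intro y hy
    set u := F y with hu
    have hu0 : 0 ≤ u := cdfF_nonneg y
    have hu1 : u ≤ 1 := cdfF_le_one (m := m) y
    set j := Nat.floor (u / (ε/8)) with hj
    refine ⟨j, hy, ?_⟩
    have hjle : (j:ℝ) * (ε/8) ≤ u := by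
      have := Nat.floor_le (by positivity : (0:ℝ) ≤ u / (ε/8))
      calc (j:ℝ) * (ε/8) ≤ (u / (ε/8)) * (ε/8) := by
            have h9 : (0:ℝ) ≤ ε/8 := by linarith
            exact mul_le_mul_of_nonneg_right this h9
        _ = u := div_mul_cancel₀ u (by positivity : (0:ℝ) < ε/8).ne'
    have hjlt : u < ((j:ℝ)+1) * (ε/8) := by
      have := Nat.lt_floor_add_one (u / (ε/8))
      calc u = (u / (ε/8)) * (ε/8) := (div_mul_cancel₀ u (by positivity : (0:ℝ) < ε/8).ne').symm
        _ < ((j:ℝ)+1) * (ε/8) := by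
            have h9 : (0:ℝ) < ε/8 := by linarith
            exact mul_lt_mul_of_pos_right this h9
    have hcjval : cj j = (j:ℝ) * (ε/8) := min_eq_left (by linarith)
    have hFdiff : |F (xc (cj j)) - F y| < ε := by
      have h1 := hxcF (cj j) (hcjmem j)
      rw [hcjval] at h1 ⊢
      have h2 : |(j:ℝ)*(ε/8) - u| ≤ ε/8 := by
        rw [abs_le]
        constructor <;> nlinarith
      calc |F (xc ((j:ℝ)*(ε/8))) - F y|
          ≤ |F (xc ((j:ℝ)*(ε/8))) - (j:ℝ)*(ε/8)| + |(j:ℝ)*(ε/8) - u| := abs_sub_le _ _ _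
        _ < ε := by linarith
    calc pdist m X (xc (cj j)) y ≤ ENNReal.ofReal |F (xc (cj j)) - F y| :=
          pdist_le_cdf hatom X _ y
      _ < ENNReal.ofReal ε := (ENNReal.ofReal_lt_ofReal_iff hε).2 hFdiff
  -- a.e. bound on X
  have haeX : ∀ᵐ y ∂(m.restrict X), ENNReal.ofReal ‖h y‖ ≤ S := by
    rw [Filter.eventually_iff, mem_ae_iff, Measure.restrict_apply' hXmeas]
    have hsubU : {y | ENNReal.ofReal ‖h y‖ ≤ S}ᶜ ∩ X ⊆
        ⋃ j : ℕ, ({y | ¬ (ENNReal.ofReal ‖h y‖ ≤ S)} ∩ dBall m X (xc (cj j)) ε) := by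
      rintro y ⟨hybad, hyX⟩
      obtain ⟨j, hj⟩ := hcover y hyX
      exact Set.mem_iUnion.2 ⟨j, hybad, hj⟩
    exact measure_mono_null hsubU (measure_iUnion_null hnull)
  have hess : essSup (fun x => ENNReal.ofReal ‖h x‖) (m.restrict X) ≤ S :=
    essSup_le_of_ae_le _ haeX
  refine hess.trans ?_
  -- final arithmetic: S ≤ ofReal (8/ε) * K + κ
  have hdiv8 : I / ENNReal.ofReal (ε/8) ≤ ENNReal.ofReal (8/ε) * semi := by
    rw [div_eq_mul_inv, ← ENNReal.ofReal_inv_of_pos (by linarith : (0:ℝ) < ε/8)]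
    rw [show ((ε/8):ℝ)⁻¹ = 8/ε by rw [inv_div]]
    rw [mul_comm]
    exact mul_le_mul_right hI _
  have hdiv2 : L0 / ENNReal.ofReal (ε/2) ≤ ENNReal.ofReal (8/ε) * L0 := by
    rw [div_eq_mul_inv, ← ENNReal.ofReal_inv_of_pos (by linarith : (0:ℝ) < ε/2)]
    rw [show ((ε/2):ℝ)⁻¹ = 2/ε by rw [inv_div]]
    rw [mul_comm]
    refine mul_le_mul_left (ENNReal.ofReal_le_ofReal ?_) _
    rw [div_le_div_iff₀ hε hε]
    nlinarith
  calc S = I / ENNReal.ofReal (ε/8) + L0 / ENNReal.ofReal (ε/2) + (κ:ℝ≥0∞) := by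
        rw [hS, ht]; abel
    _ ≤ ENNReal.ofReal (8/ε) * semi + ENNReal.ofReal (8/ε) * L0 + (κ:ℝ≥0∞) := by
        gcongr
    _ = ENNReal.ofReal (8/ε) * K + (κ:ℝ≥0∞) := by
        rw [hK]
        unfold kellerNorm
        rw [← hsemi, ← hL0, mul_add]
        abel
end
end

section
/- Let X be a compact subset of ℝ and m an atom-free Borel probability measure on X. Then for all p ≥ 1, every function h : X → ℂ, and every ε > 0, one has ∫_X osc(h,ε,x)^p dm(x) ≤ 2ε · Var_p(h)^p. -/
open MeasureTheory Filter Set Topology ENNReal NNReal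

noncomputable section

namespace Keller15

open scoped Classical

def cVal (p : ℝ) (h : ℝ → ℂ) {k : ℕ} (x : Fin (k + 1) → ℝ) : ℝ≥0∞ :=
  ENNReal.ofReal (∑ i : Fin k, ‖h (x i.succ) - h (x i.castSucc)‖ ^ p)

def Wp (p : ℝ) (h : ℝ → ℂ) (S : Set ℝ) : ℝ≥0∞ :=
  ⨆ c : (k : ℕ) × (Fin (k + 1) → ℝ),
    if StrictMono c.2 ∧ ∀ i, c.2 i ∈ S then cVal p h c.2 else 0

instance : Nonempty ((k : ℕ) × (Fin (k + 1) → ℝ)) := ⟨⟨0, fun _ => 0⟩⟩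

lemma le_Wp {p : ℝ} {h : ℝ → ℂ} {S : Set ℝ} {k : ℕ} {x : Fin (k + 1) → ℝ}
    (h1 : StrictMono x) (h2 : ∀ i, x i ∈ S) : cVal p h x ≤ Wp p h S := by
  have hle := le_iSup (fun c : (k : ℕ) × (Fin (k + 1) → ℝ) =>
    if StrictMono c.2 ∧ ∀ i, c.2 i ∈ S then cVal p h c.2 else 0) ⟨k, x⟩
  simp only [if_pos (And.intro h1 h2)] at hle
  exact hle

lemma Wp_le {p : ℝ} {h : ℝ → ℂ} {S : Set ℝ} {B : ℝ≥0∞}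
    (hB : ∀ (k : ℕ) (x : Fin (k + 1) → ℝ), StrictMono x → (∀ i, x i ∈ S) → cVal p h x ≤ B) :
    Wp p h S ≤ B := by
  refine iSup_le fun c => ?_
  by_cases hc : StrictMono c.2 ∧ ∀ i, c.2 i ∈ S
  · rw [if_pos hc]; exact hB c.1 c.2 hc.1 hc.2
  · rw [if_neg hc]; exact zero_le

lemma Wp_mono {p : ℝ} {h : ℝ → ℂ} {S T : Set ℝ} (hST : S ⊆ T) : Wp p h S ≤ Wp p h T :=
  Wp_le fun _ x h1 h2 => le_Wp h1 fun i => hST (h2 i)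

lemma sum_range_add' (f : ℕ → ℝ) (a b : ℕ) :
    ∑ n ∈ Finset.range (a + b), f n
      = ∑ n ∈ Finset.range a, f n + ∑ n ∈ Finset.range b, f (a + n) := by
  induction b with
  | zero => simp
  | succ b ih =>
    rw [Nat.add_succ, Finset.sum_range_succ, ih, Finset.sum_range_succ]
    ring

lemma Wp_union {p : ℝ} {h : ℝ → ℂ} {S T : Set ℝ}
    (hsep : ∀ s ∈ S, ∀ t ∈ T, s < t) :
    Wp p h S + Wp p h T ≤ Wp p h (S ∪ T) := by
  refine ENNReal.iSup_add_iSup_le fun c1 c2 => ?_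
  by_cases h1 : StrictMono c1.2 ∧ ∀ i, c1.2 i ∈ S
  swap
  · rw [if_neg h1, zero_add]
    by_cases h2 : StrictMono c2.2 ∧ ∀ i, c2.2 i ∈ T
    · rw [if_pos h2]; exact le_Wp h2.1 fun i => Or.inr (h2.2 i)
    · rw [if_neg h2]; exact zero_le
  by_cases h2 : StrictMono c2.2 ∧ ∀ i, c2.2 i ∈ T
  swap
  · rw [if_pos h1, if_neg h2, add_zero]; exact le_Wp h1.1 fun i => Or.inl (h1.2 i)
  rw [if_pos h1, if_pos h2]
  obtain ⟨k1, x1⟩ := c1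
  obtain ⟨k2, x2⟩ := c2
  obtain ⟨hm1, hS1⟩ := h1
  obtain ⟨hm2, hS2⟩ := h2
  -- concatenated chain
  set y : ℕ → ℝ := fun n =>
    if n ≤ k1 then x1 ⟨min n k1, Nat.lt_succ_of_le (min_le_right _ _)⟩
    else x2 ⟨min (n - (k1 + 1)) k2, Nat.lt_succ_of_le (min_le_right _ _)⟩ with hy
  have hy1 : ∀ n, n ≤ k1 → y n = x1 ⟨min n k1, Nat.lt_succ_of_le (min_le_right _ _)⟩ := by
    intro n hn; simp only [hy, if_pos hn]
  have hy2 : ∀ n, k1 < n →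
      y n = x2 ⟨min (n - (k1 + 1)) k2, Nat.lt_succ_of_le (min_le_right _ _)⟩ := by
    intro n hn
    have hnn : ¬ (n ≤ k1) := by omega
    simp only [hy, if_neg hnn]
  have hy1' : ∀ j : Fin (k1 + 1), y j.1 = x1 j := by
    intro j
    have hj : j.1 ≤ k1 := by have := j.isLt; omega
    rw [hy1 j.1 hj]
    congr 1
    exact Fin.ext (by have := j.isLt; simp only []; omega)
  have hy2' : ∀ j : Fin (k2 + 1), y (k1 + 1 + j.1) = x2 j := by
    intro j
    rw [hy2 (k1 + 1 + j.1) (by omega)]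
    congr 1
    exact Fin.ext (by have := j.isLt; simp only []; omega)
  set xc : Fin (k1 + 1 + k2 + 1) → ℝ := fun i => y i.1 with hxc
  have hmono : StrictMono xc := by
    intro i j hij
    have hij' : (i : ℕ) < (j : ℕ) := hij
    have hi2 : (i : ℕ) < k1 + 1 + k2 + 1 := i.isLt
    have hj2 : (j : ℕ) < k1 + 1 + k2 + 1 := j.isLt
    show y i.1 < y j.1
    rcases le_or_gt (j : ℕ) k1 with hj1 | hj1
    · rw [hy1 _ (by omega), hy1 _ hj1]
      exact hm1 (Fin.mk_lt_mk.mpr (by omega))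
    · rcases le_or_gt (i : ℕ) k1 with hi1 | hi1
      · rw [hy1 _ hi1, hy2 _ hj1]
        exact hsep _ (hS1 _) _ (hS2 _)
      · rw [hy2 _ hi1, hy2 _ hj1]
        exact hm2 (Fin.mk_lt_mk.mpr (by omega))
  have hmem : ∀ i, xc i ∈ S ∪ T := by
    intro i
    show y i.1 ∈ S ∪ T
    rcases le_or_gt (i : ℕ) k1 with hi1 | hi1
    · rw [hy1 _ hi1]; exact Or.inl (hS1 _)
    · rw [hy2 _ hi1]; exact Or.inr (hS2 _)
  refine le_trans ?_ (le_Wp hmono hmem)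
  -- sums
  set u : ℕ → ℝ := fun n => ‖h (y (n + 1)) - h (y n)‖ ^ p with hu
  have hunn : ∀ n, 0 ≤ u n := fun n => Real.rpow_nonneg (norm_nonneg _) p
  have e0 : cVal p h xc = ENNReal.ofReal (∑ n ∈ Finset.range (k1 + 1 + k2), u n) := by
    unfold cVal
    congr 1
    rw [← Fin.sum_univ_eq_sum_range u (k1 + 1 + k2)]
    exact Finset.sum_congr rfl fun i _ => rfl
  have e1 : cVal p h x1 = ENNReal.ofReal (∑ n ∈ Finset.range k1, u n) := by
    unfold cVal
    congr 1
    rw [← Fin.sum_univ_eq_sum_range u k1]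
    refine Finset.sum_congr rfl fun i _ => ?_
    have hterm : u i.1 = ‖h (x1 i.succ) - h (x1 i.castSucc)‖ ^ p := by
      show ‖h (y (i.succ.1)) - h (y (i.castSucc.1))‖ ^ p = _
      rw [hy1' i.succ, hy1' i.castSucc]
    exact hterm.symm
  have e2 : cVal p h x2
      = ENNReal.ofReal (∑ n ∈ Finset.range k2, u (k1 + 1 + n)) := by
    unfold cVal
    congr 1
    rw [← Fin.sum_univ_eq_sum_range (fun n => u (k1 + 1 + n)) k2]
    refine Finset.sum_congr rfl fun i _ => ?_
    have hterm : u (k1 + 1 + i.1) = ‖h (x2 i.succ) - h (x2 i.castSucc)‖ ^ p := by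
      show ‖h (y (k1 + 1 + i.1 + 1)) - h (y (k1 + 1 + (i.castSucc.1)))‖ ^ p = _
      rw [show k1 + 1 + i.1 + 1 = k1 + 1 + (i.succ.1) from by
        have hs : (i.succ : ℕ) = i.1 + 1 := rfl
        omega]
      rw [hy2' i.succ, hy2' i.castSucc]
    exact hterm.symm
  rw [e0, e1, e2, ← ENNReal.ofReal_add (Finset.sum_nonneg fun n _ => hunn n)
    (Finset.sum_nonneg fun n _ => hunn (k1 + 1 + n))]
  apply ENNReal.ofReal_le_ofReal
  rw [sum_range_add' u (k1 + 1) k2, Finset.sum_range_succ]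
  have := hunn k1
  linarith

lemma Wp_le_varP {p : ℝ} (hp0 : 0 < p) (h : ℝ → ℂ) (X : Set ℝ) :
    Wp p h X ≤ varP p X h ^ p := by
  refine Wp_le fun k x h1 h2 => ?_
  set s : ℝ := ∑ i : Fin k, ‖h (x i.succ) - h (x i.castSucc)‖ ^ p with hs
  have hsnn : 0 ≤ s := Finset.sum_nonneg fun i _ => Real.rpow_nonneg (norm_nonneg _) p
  have hvar : ENNReal.ofReal (s ^ (1 / p)) ≤ varP p X h := by
    unfold varP
    exact le_iSup_of_le k (le_iSup_of_le x (le_iSup_of_le h1 (le_iSup_of_le h2 le_rfl)))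
  have key : (s ^ (1 / p)) ^ p = s := by
    rw [← Real.rpow_mul hsnn, one_div_mul_cancel hp0.ne', Real.rpow_one]
  calc cVal p h x = ENNReal.ofReal ((s ^ (1 / p)) ^ p) := by rw [key]; rfl
    _ = ENNReal.ofReal (s ^ (1 / p)) ^ p :=
        (ENNReal.ofReal_rpow_of_nonneg (Real.rpow_nonneg hsnn _) hp0.le).symm
    _ ≤ varP p X h ^ p := ENNReal.rpow_le_rpow hvar hp0.le

lemma pair_le_Wp {p : ℝ} (hp0 : 0 < p) (h : ℝ → ℂ) {S : Set ℝ} {y y' : ℝ}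
    (hy : y ∈ S) (hy' : y' ∈ S) :
    ENNReal.ofReal (‖h y - h y'‖ ^ p) ≤ Wp p h S := by
  have main : ∀ a b : ℝ, a ∈ S → b ∈ S → a < b →
      ENNReal.ofReal (‖h b - h a‖ ^ p) ≤ Wp p h S := by
    intro a b ha hb hab
    set x : Fin 2 → ℝ := fun i => if i.1 = 0 then a else b with hx
    have hmono : StrictMono x := by
      intro i j hij
      have hij' : (i : ℕ) < (j : ℕ) := hij
      have := i.isLt; have := j.isLt
      have hi0 : (i : ℕ) = 0 := by omega
      have hj1 : (j : ℕ) = 1 := by omega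
      show (if (i : ℕ) = 0 then a else b) < (if (j : ℕ) = 0 then a else b)
      rw [if_pos hi0, if_neg (by omega)]
      exact hab
    have hmem : ∀ i, x i ∈ S := by
      intro i
      show (if (i : ℕ) = 0 then a else b) ∈ S
      by_cases hi : (i : ℕ) = 0
      · rw [if_pos hi]; exact ha
      · rw [if_neg hi]; exact hb
    refine le_trans ?_ (le_Wp hmono hmem)
    unfold cVal
    apply le_of_eq
    congr 1
    rw [Fin.sum_univ_one]
    have h1 : x ((0 : Fin 1).succ) = b := by
      show (if ((0 : Fin 1).succ : ℕ) = 0 then a else b) = b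
      norm_num
    have h0 : x ((0 : Fin 1).castSucc) = a := by
      show (if ((0 : Fin 1).castSucc : ℕ) = 0 then a else b) = a
      norm_num
    rw [h1, h0]
  rcases lt_trichotomy y y' with hlt | heq | hlt
  · rw [norm_sub_rev]; exact main y y' hy hy' hlt
  · subst heq
    simp only [sub_self, norm_zero, Real.zero_rpow hp0.ne', ENNReal.ofReal_zero]
    exact zero_le
  · exact main y' y hy' hy hlt

def Fm (m : Measure ℝ) : ℝ → ℝ := fun t => (m (Iic t)).toReal

variable {m : Measure ℝ} [IsProbabilityMeasure m]

lemma Fm_mono : Monotone (Fm m) := fun a b hab =>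
  ENNReal.toReal_mono (measure_ne_top m _) (measure_mono (Iic_subset_Iic.2 hab))

lemma Fm_nonneg (t : ℝ) : 0 ≤ Fm m t := ENNReal.toReal_nonneg

lemma Fm_le_one (t : ℝ) : Fm m t ≤ 1 := by
  have h := prob_le_one (μ := m) (s := Iic t)
  have := ENNReal.toReal_mono ENNReal.one_ne_top h
  simpa [Fm] using this

lemma meas_Iic (t : ℝ) : m (Iic t) = ENNReal.ofReal (Fm m t) :=
  (ENNReal.ofReal_toReal (measure_ne_top m _)).symm

lemma meas_Iic_eq_Iio (hatom : ∀ x : ℝ, m {x} = 0) (c : ℝ) : m (Iic c) = m (Iio c) := by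
  refine le_antisymm ?_ (measure_mono Iio_subset_Iic_self)
  calc m (Iic c) ≤ m (Iio c ∪ {c}) := measure_mono (fun z hz => by
        rcases lt_or_eq_of_le (mem_Iic.1 hz) with h | h
        · exact Or.inl h
        · exact Or.inr h)
    _ ≤ m (Iio c) + m {c} := measure_union_le _ _
    _ = m (Iio c) := by rw [hatom c, add_zero]

lemma meas_Iio (hatom : ∀ x : ℝ, m {x} = 0) (c : ℝ) :
    m (Iio c) = ENNReal.ofReal (Fm m c) := by
  rw [← meas_Iic_eq_Iio hatom, meas_Iic]

/-- upper bound for the measure of a sublevel set of `Fm`. -/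
lemma measure_Fm_lt_le (hatom : ∀ x : ℝ, m {x} = 0) (b : ℝ) :
    m {t | Fm m t < b} ≤ ENNReal.ofReal b := by
  set S := {t | Fm m t < b} with hS
  have hlower : ∀ s ∈ S, ∀ t : ℝ, t ≤ s → t ∈ S := fun s hs t hts =>
    lt_of_le_of_lt (Fm_mono hts) hs
  by_cases hne : S.Nonempty
  swap
  · rw [not_nonempty_iff_eq_empty.1 hne]; simp
  have hb0 : 0 < b := by
    obtain ⟨t, ht⟩ := hne
    exact lt_of_le_of_lt (Fm_nonneg t) ht
  by_cases hbdd : BddAbove S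
  · set c := sSup S with hc
    have hIio : Iio c ⊆ S := fun z hz => by
      obtain ⟨s, hsS, hzs⟩ := exists_lt_of_lt_csSup hne hz
      exact hlower s hsS z hzs.le
    have hsub : S ⊆ Iic c := fun s hs => le_csSup hbdd hs
    have hUnion : Iio c = ⋃ n : ℕ, Iic (c - 1 / (n + 1)) := by
      ext z
      simp only [mem_Iio, mem_iUnion, mem_Iic]
      constructor
      · intro hz
        obtain ⟨n, hn⟩ := exists_nat_one_div_lt (sub_pos.2 hz)
        exact ⟨n, by linarith⟩
      · rintro ⟨n, hn⟩
        have hpos : (0 : ℝ) < 1 / (n + 1) := by positivity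
        linarith
    calc m S ≤ m (Iic c) := measure_mono hsub
      _ = m (Iio c) := meas_Iic_eq_Iio hatom c
      _ = ⨆ n : ℕ, m (Iic (c - 1 / (n + 1))) := by
        rw [hUnion]
        refine Monotone.measure_iUnion (fun i j hij => Iic_subset_Iic.2 ?_)
        have h1 : 1 / ((j : ℝ) + 1) ≤ 1 / ((i : ℝ) + 1) := by
          apply one_div_le_one_div_of_le
          · positivity
          · linarith [(Nat.cast_le (α := ℝ)).2 hij]
        linarith
      _ ≤ ENNReal.ofReal b := iSup_le fun n => by
        have hmem : c - 1 / (n + 1) ∈ S := hIio (by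
          have hpos : (0 : ℝ) < 1 / (n + 1) := by positivity
          simp only [mem_Iio]; linarith)
        rw [meas_Iic]
        exact ENNReal.ofReal_le_ofReal (le_of_lt hmem)
  · have hSuniv : S = univ := by
      ext t
      simp only [mem_univ, iff_true]
      obtain ⟨s, hsS, hts⟩ := not_bddAbove_iff.1 hbdd t
      exact hlower s hsS t hts.le
    have hsup : (⨆ n : ℕ, m (Iic (n : ℝ))) = 1 := by
      rw [← Monotone.measure_iUnion (fun i j hij => Iic_subset_Iic.2 (by exact_mod_cast hij))]
      rw [show (⋃ n : ℕ, Iic (n : ℝ)) = univ from eq_univ_of_forall fun t => by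
        obtain ⟨n, hn⟩ := exists_nat_ge t
        exact mem_iUnion.2 ⟨n, hn⟩]
      exact measure_univ
    have h1 : m S = 1 := by rw [hSuniv]; exact measure_univ
    rw [h1]
    by_contra hba
    push_neg at hba
    rw [← hsup] at hba
    obtain ⟨n, hn⟩ := lt_iSup_iff.1 hba
    rw [meas_Iic] at hn
    have hFb : Fm m (n : ℝ) < b := by
      have hmem : (n : ℝ) ∈ S := by rw [hSuniv]; trivial
      exact hmem
    have := (ENNReal.ofReal_lt_ofReal_iff_of_nonneg hb0.le).1 hn
    linarith

/-- lower bound for the measure of a sublevel set of `Fm`. -/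
lemma ofReal_le_measure_Fm_lt (hatom : ∀ x : ℝ, m {x} = 0)
    {x0 : ℝ} (hx0 : Fm m x0 = 1) {a : ℝ} (ha1 : a ≤ 1) :
    ENNReal.ofReal a ≤ m {t | Fm m t < a} := by
  rcases le_or_gt a 0 with ha0 | ha0
  · simp [ENNReal.ofReal_eq_zero.2 ha0]
  set S := {t | Fm m t < a} with hS
  have hlower : ∀ s ∈ S, ∀ t : ℝ, t ≤ s → t ∈ S := fun s hs t hts =>
    lt_of_le_of_lt (Fm_mono hts) hs
  have hne : S.Nonempty := by
    have hInter : (⋂ n : ℕ, Iic (-(n : ℝ))) = ∅ := by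
      refine eq_empty_of_forall_notMem fun t ht => ?_
      obtain ⟨n, hn⟩ := exists_nat_gt (-t)
      have := mem_iInter.1 ht n
      simp only [mem_Iic] at this
      linarith
    have h0 : (⨅ n : ℕ, m (Iic (-(n : ℝ)))) = 0 := by
      rw [← Antitone.measure_iInter (fun i j hij => Iic_subset_Iic.2 (by
          simp only [neg_le_neg_iff]; exact_mod_cast hij))
        (fun n => measurableSet_Iic.nullMeasurableSet) ⟨0, measure_ne_top m _⟩]
      rw [hInter]
      exact measure_empty
    have hlt : (⨅ n : ℕ, m (Iic (-(n : ℝ)))) < ENNReal.ofReal a := by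
      rw [h0]; exact ENNReal.ofReal_pos.2 ha0
    obtain ⟨n, hn⟩ := iInf_lt_iff.1 hlt
    rw [meas_Iic] at hn
    exact ⟨-(n : ℝ), (ENNReal.ofReal_lt_ofReal_iff ha0).1 hn⟩
  have hbdd : BddAbove S := by
    refine ⟨x0, fun t ht => ?_⟩
    by_contra hlt
    push_neg at hlt
    have : (1 : ℝ) ≤ Fm m t := hx0 ▸ Fm_mono hlt.le
    have : Fm m t < a := ht
    linarith
  set c := sSup S with hc
  have hIio : Iio c ⊆ S := fun z hz => by
    obtain ⟨s, hsS, hzs⟩ := exists_lt_of_lt_csSup hne hz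
    exact hlower s hsS z hzs.le
  have hge : ∀ n : ℕ, ENNReal.ofReal a ≤ m (Iic (c + 1 / (n + 1))) := by
    intro n
    have hpos : (0 : ℝ) < 1 / (n + 1) := by positivity
    have hnotin : c + 1 / (n + 1) ∉ S := fun hin => by
      have := le_csSup hbdd hin
      linarith
    have hFa : a ≤ Fm m (c + 1 / (n + 1)) := not_lt.1 hnotin
    rw [meas_Iic]
    exact ENNReal.ofReal_le_ofReal hFa
  have hInter : (⋂ n : ℕ, Iic (c + 1 / (n + 1))) = Iic c := by
    ext z
    simp only [mem_iInter, mem_Iic]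
    constructor
    · intro hz
      by_contra hzc
      push_neg at hzc
      obtain ⟨n, hn⟩ := exists_nat_one_div_lt (sub_pos.2 hzc)
      have := hz n
      linarith
    · intro hz n
      have hpos : (0 : ℝ) < 1 / (n + 1) := by positivity
      linarith
  have hca : ENNReal.ofReal a ≤ m (Iic c) := by
    rw [← hInter, Antitone.measure_iInter (fun i j hij => Iic_subset_Iic.2 (by
        have h1 : 1 / ((j : ℝ) + 1) ≤ 1 / ((i : ℝ) + 1) := by
          apply one_div_le_one_div_of_le
          · positivity
          · linarith [(Nat.cast_le (α := ℝ)).2 hij]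
        linarith))
      (fun n => measurableSet_Iic.nullMeasurableSet) ⟨0, measure_ne_top m _⟩]
    exact le_iInf hge
  calc ENNReal.ofReal a ≤ m (Iic c) := hca
    _ = m (Iio c) := meas_Iic_eq_Iio hatom c
    _ ≤ m S := measure_mono hIio

lemma pdist_eq_of_le {X : Set ℝ} (hXmeas : MeasurableSet X) (hmX : m X = 1)
    (hatom : ∀ x : ℝ, m {x} = 0) {x y : ℝ} (hxy : x ≤ y) :
    pdist m X x y = ENNReal.ofReal (Fm m y - Fm m x) := by
  have hXc : m Xᶜ = 0 := by
    rw [measure_compl hXmeas (measure_ne_top m X), hmX, measure_univ, tsub_self]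
  set A := {z : ℝ | (x ≤ z ∧ z ≤ y) ∨ (y ≤ z ∧ z ≤ x)} with hA
  have h1 : pdist m X x y = m A := by
    unfold pdist
    refine le_antisymm (measure_mono fun z hz => hz.2) ?_
    calc m A ≤ m ({z | z ∈ X ∧ ((x ≤ z ∧ z ≤ y) ∨ (y ≤ z ∧ z ≤ x))} ∪ Xᶜ) :=
          measure_mono (fun z hz => by
            by_cases hzX : z ∈ X
            · exact Or.inl ⟨hzX, hz⟩
            · exact Or.inr hzX)
      _ ≤ m {z | z ∈ X ∧ ((x ≤ z ∧ z ≤ y) ∨ (y ≤ z ∧ z ≤ x))} + m Xᶜ := measure_union_le _ _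
      _ = m {z | z ∈ X ∧ ((x ≤ z ∧ z ≤ y) ∨ (y ≤ z ∧ z ≤ x))} := by rw [hXc, add_zero]
  have h2 : A = Icc x y := by
    ext z
    simp only [hA, mem_setOf_eq, mem_Icc]
    constructor
    · rintro (⟨ha, hb⟩ | ⟨ha, hb⟩)
      · exact ⟨ha, hb⟩
      · constructor <;> linarith
    · exact fun hz => Or.inl hz
  have h3 : Icc x y = Iic y \ Iio x := by
    ext z
    simp only [mem_Icc, mem_diff, mem_Iic, mem_Iio, not_lt]
    tauto
  rw [h1, h2, h3, measure_diff (show Iio x ⊆ Iic y from fun z hz => le_trans (le_of_lt hz) hxy)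
    measurableSet_Iio.nullMeasurableSet (measure_ne_top m _),
    meas_Iic, meas_Iio hatom, ENNReal.ofReal_sub _ (Fm_nonneg x)]

lemma pdist_abs {X : Set ℝ} (hXmeas : MeasurableSet X) (hmX : m X = 1)
    (hatom : ∀ x : ℝ, m {x} = 0) (x y : ℝ) :
    pdist m X x y = ENNReal.ofReal |Fm m y - Fm m x| := by
  rcases le_total x y with hxy | hyx
  · rw [pdist_eq_of_le hXmeas hmX hatom hxy,
      abs_of_nonneg (sub_nonneg.2 (Fm_mono hxy))]
  · have hsymm : pdist m X x y = pdist m X y x := by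
      unfold pdist
      congr 1
      ext z
      simp only [mem_setOf_eq]
      tauto
    rw [hsymm, pdist_eq_of_le hXmeas hmX hatom hyx, abs_sub_comm,
      abs_of_nonneg (sub_nonneg.2 (Fm_mono hyx))]

end Keller15

open Keller15

/-- oscillation integral bounded by the `p`-variation. -/
theorem statement15 (X : Set ℝ) (hX : IsCompact X)
    (m : Measure ℝ) [IsProbabilityMeasure m] (hmX : m X = 1) (hatom : ∀ x, m {x} = 0)
    (p : ℝ) (hp : 1 ≤ p) (h : ℝ → ℂ) (ε : ℝ) (hε : 0 < ε) :
    ∫⁻ x in X, oscK m X h ε x ^ p ∂m ≤ ENNReal.ofReal (2 * ε) * varP p X h ^ p := by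
  classical
  have hp0 : 0 < p := lt_of_lt_of_le one_pos hp
  have hXmeas : MeasurableSet X := hX.isClosed.measurableSet
  set V : ℝ≥0∞ := varP p X h ^ p with hV
  set F : ℝ → ℝ := Fm m with hF
  have hFmono : Monotone F := Fm_mono (m := m)
  have hFmeas : Measurable F := hFmono.measurable
  -- there is a point where F equals 1
  obtain ⟨x0, hx0⟩ : ∃ x0 : ℝ, F x0 = 1 := by
    have hXne : X.Nonempty := nonempty_of_measure_ne_zero (by rw [hmX]; exact one_ne_zero)
    refine ⟨sSup X, ?_⟩
    have h1 : m (Iic (sSup X)) = 1 := le_antisymm prob_le_one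
      (by rw [← hmX]; exact measure_mono fun x hx => le_csSup hX.bddAbove hx)
    simp only [hF, Fm, h1, ENNReal.toReal_one]
  have key : ∀ η : ℝ, 0 < η →
      ∫⁻ x in X, oscK m X h ε x ^ p ∂m ≤ ENNReal.ofReal (2 * ε + 2 * η) * V := by
    intro η hη
    -- cells and windows
    set C : ℕ → Set ℝ := fun j => X ∩ F ⁻¹' (Ico ((j : ℝ) * η) (((j : ℝ) + 1) * η)) with hC
    set G : ℕ → Set ℝ := fun j =>
      X ∩ F ⁻¹' (Ioo ((j : ℝ) * η - ε) (((j : ℝ) + 1) * η + ε)) with hG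
    set E : ℕ → ℝ≥0∞ := fun j =>
      ⨆ y ∈ G j, ⨆ y' ∈ G j, ENNReal.ofReal (‖h y - h y'‖ ^ p) with hE
    have hGmeas : ∀ j, MeasurableSet (G j) := fun j =>
      hXmeas.inter (hFmeas measurableSet_Ioo)
    -- pointwise bound on cells
    have hpoint : ∀ j, ∀ x ∈ C j, oscK m X h ε x ^ p ≤ E j := by
      intro j x hx
      obtain ⟨hxX, hxF⟩ := hx
      simp only [mem_preimage, mem_Ico] at hxF
      have hball : dBall m X x ε ⊆ G j := by
        intro y hy
        obtain ⟨hyX, hyd⟩ := hy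
        rw [pdist_abs hXmeas hmX hatom x y] at hyd
        have habs : |F y - F x| < ε := (ENNReal.ofReal_lt_ofReal_iff hε).1 hyd
        rw [abs_lt] at habs
        refine ⟨hyX, ?_⟩
        simp only [mem_preimage, mem_Ioo]
        constructor <;> linarith [hxF.1, hxF.2, habs.1, habs.2]
      have hEub : ∀ z : ℝ × ℝ, z ∈ (G j) ×ˢ (G j) →
          ENNReal.ofReal ‖h z.1 - h z.2‖ ≤ E j ^ (1 / p) := by
        intro z hz
        have h1 : ENNReal.ofReal (‖h z.1 - h z.2‖ ^ p) ≤ E j := by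
          rw [hE]
          exact le_iSup₂_of_le z.1 hz.1 (le_iSup₂_of_le z.2 hz.2 le_rfl)
        calc ENNReal.ofReal ‖h z.1 - h z.2‖
            = ENNReal.ofReal (‖h z.1 - h z.2‖ ^ p) ^ (1 / p) := by
              rw [← ENNReal.ofReal_rpow_of_nonneg (norm_nonneg _) hp0.le,
                ← ENNReal.rpow_mul, mul_one_div_cancel hp0.ne', ENNReal.rpow_one]
          _ ≤ E j ^ (1 / p) := ENNReal.rpow_le_rpow h1 (by positivity)
      have hosc : oscK m X h ε x ≤ E j ^ (1 / p) := by
        unfold oscK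
        have hle : (m.prod m).restrict (dBall m X x ε ×ˢ dBall m X x ε)
            ≤ (m.prod m).restrict ((G j) ×ˢ (G j)) :=
          Measure.restrict_mono (Set.prod_mono hball hball) le_rfl
        refine le_trans (essSup_mono_measure' hle) ?_
        refine essSup_le_of_ae_le _ ?_
        filter_upwards [ae_restrict_mem ((hGmeas j).prod (hGmeas j))] with z hz
        exact hEub z hz
      calc oscK m X h ε x ^ p ≤ (E j ^ (1 / p)) ^ p := ENNReal.rpow_le_rpow hosc hp0.le
        _ = E j := by rw [← ENNReal.rpow_mul, one_div_mul_cancel hp0.ne', ENNReal.rpow_one]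
    -- cover by cells
    have hcover : X = ⋃ j : ℕ, C j := by
      refine le_antisymm (fun t ht => ?_) (iUnion_subset fun j => inter_subset_left)
      have h0 : 0 ≤ F t := Fm_nonneg t
      refine mem_iUnion.2 ⟨⌊F t / η⌋₊, ht, ?_⟩
      simp only [mem_preimage, mem_Ico]
      constructor
      · calc (↑⌊F t / η⌋₊ * η) ≤ (F t / η) * η :=
            mul_le_mul_of_nonneg_right (Nat.floor_le (by positivity)) hη.le
          _ = F t := div_mul_cancel₀ _ hη.ne'
      · calc F t = (F t / η) * η := (div_mul_cancel₀ _ hη.ne').symm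
          _ < (↑⌊F t / η⌋₊ + 1) * η :=
            mul_lt_mul_of_pos_right (Nat.lt_floor_add_one _) hη
    set N : ℕ := ⌊1 / η⌋₊ + 2 with hN
    have hNη : 1 < (N : ℝ) * η := by
      have h1 : 1 / η < (N : ℝ) := by
        have := Nat.lt_floor_add_one (1 / η)
        have hcast : ((⌊1 / η⌋₊ : ℝ) + 2) = (N : ℝ) := by push_cast [hN]; ring
        linarith
      calc (1 : ℝ) = (1 / η) * η := by field_simp
        _ < (N : ℝ) * η := mul_lt_mul_of_pos_right h1 hη
    have hCempty : ∀ j, N ≤ j → C j = ∅ := by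
      intro j hj
      refine eq_empty_of_forall_notMem fun t ht => ?_
      obtain ⟨htX, htF⟩ := ht
      simp only [mem_preimage, mem_Ico] at htF
      have h1 : F t ≤ 1 := Fm_le_one t
      have h2 : (N : ℝ) ≤ (j : ℝ) := Nat.cast_le.2 hj
      have h3 : (N : ℝ) * η ≤ (j : ℝ) * η := mul_le_mul_of_nonneg_right h2 hη.le
      linarith [htF.1]
    -- per-cell integral bound
    have hcell : ∀ j, ∫⁻ t in C j, oscK m X h ε t ^ p ∂m ≤ ENNReal.ofReal η * E j := by
      intro j
      rcases eq_empty_or_nonempty (C j) with hCe | hCne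
      · rw [hCe]; simp
      have hCmeas : MeasurableSet (C j) := hXmeas.inter (hFmeas measurableSet_Ico)
      have h1 : ∫⁻ t in C j, oscK m X h ε t ^ p ∂m ≤ ∫⁻ _ in C j, E j ∂m := by
        refine lintegral_mono_ae ?_
        filter_upwards [ae_restrict_mem hCmeas] with t ht
        exact hpoint j t ht
      rw [setLIntegral_const] at h1
      refine h1.trans ?_
      have hj1 : (j : ℝ) * η ≤ 1 := by
        obtain ⟨t, htX, htF⟩ := hCne
        simp only [mem_preimage, mem_Ico] at htF
        exact le_trans htF.1 (Fm_le_one t)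
      have hmC : m (C j) ≤ ENNReal.ofReal η := by
        have hsub : C j ⊆ {t | F t < ((j : ℝ) + 1) * η} \ {t | F t < (j : ℝ) * η} := by
          intro t ht
          obtain ⟨htX, htF⟩ := ht
          simp only [mem_preimage, mem_Ico] at htF
          exact ⟨htF.2, not_lt.2 htF.1⟩
        have hmeasa : MeasurableSet {t : ℝ | F t < (j : ℝ) * η} := hFmeas measurableSet_Iio
        have hss : {t : ℝ | F t < (j : ℝ) * η} ⊆ {t : ℝ | F t < ((j : ℝ) + 1) * η} := by
          intro t ht
          simp only [mem_setOf_eq] at *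
          have hexp : ((j : ℝ) + 1) * η = (j : ℝ) * η + η := by ring
          linarith
        calc m (C j) ≤ m ({t | F t < ((j : ℝ) + 1) * η} \ {t | F t < (j : ℝ) * η}) :=
              measure_mono hsub
          _ = m {t | F t < ((j : ℝ) + 1) * η} - m {t | F t < (j : ℝ) * η} :=
              measure_diff hss hmeasa.nullMeasurableSet (measure_ne_top m _)
          _ ≤ ENNReal.ofReal (((j : ℝ) + 1) * η) - ENNReal.ofReal ((j : ℝ) * η) :=
              tsub_le_tsub (measure_Fm_lt_le hatom _)
                (ofReal_le_measure_Fm_lt hatom hx0 hj1)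
          _ = ENNReal.ofReal (((j : ℝ) + 1) * η - (j : ℝ) * η) :=
              (ENNReal.ofReal_sub _ (by positivity)).symm
          _ = ENNReal.ofReal η := by ring_nf
      calc E j * m (C j) ≤ E j * ENNReal.ofReal η := mul_le_mul_right hmC _
        _ = ENNReal.ofReal η * E j := mul_comm _ _
    -- the number of residue classes
    set K : ℕ := ⌈(η + 2 * ε) / η⌉₊ with hK
    have hK0 : 0 < K := Nat.ceil_pos.2 (by positivity)
    have hKη : η + 2 * ε ≤ (K : ℝ) * η := by
      have h1 := Nat.le_ceil ((η + 2 * ε) / η)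
      calc η + 2 * ε = ((η + 2 * ε) / η) * η := by field_simp
        _ ≤ (K : ℝ) * η := mul_le_mul_of_nonneg_right h1 hη.le
    have hKη' : (K : ℝ) * η ≤ 2 * ε + 2 * η := by
      have h1 := (Nat.ceil_lt_add_one (show (0:ℝ) ≤ (η + 2 * ε) / η by positivity)).le
      calc (K : ℝ) * η ≤ ((η + 2 * ε) / η + 1) * η := mul_le_mul_of_nonneg_right h1 hη.le
        _ = 2 * ε + 2 * η := by field_simp; ring
    -- fiber sums are bounded by V
    have hfiber : ∀ r : ℕ,
        (∑ j ∈ (Finset.range N).filter (fun j => j % K = r), E j) ≤ V := by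
      intro r
      have main : ∀ J : Finset ℕ, (∀ j ∈ J, ∀ j' ∈ J, j < j' → j + K ≤ j') →
          (∑ j ∈ J, E j) ≤ Wp p h (⋃ j ∈ J, G j) := by
        intro J
        induction J using Finset.induction_on_max with
        | empty => intro _; simp
        | insert a s ha ih =>
          intro hsep
          have hsep' : ∀ j ∈ s, ∀ j' ∈ s, j < j' → j + K ≤ j' := fun j hj j' hj' =>
            hsep j (Finset.mem_insert_of_mem hj) j' (Finset.mem_insert_of_mem hj')
          have hans : a ∉ s := fun hc => lt_irrefl a (ha a hc)
          rw [Finset.sum_insert hans]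
          have hEa : E a ≤ Wp p h (G a) := by
            rw [hE]
            exact iSup₂_le fun y hy => iSup₂_le fun y' hy' => pair_le_Wp hp0 h hy hy'
          have hord : ∀ u ∈ ⋃ j ∈ s, G j, ∀ v ∈ G a, u < v := by
            intro u hu v hv
            simp only [mem_iUnion, exists_prop] at hu
            obtain ⟨j, hj, hu⟩ := hu
            have hja : j + K ≤ a :=
              hsep j (Finset.mem_insert_of_mem hj) a (Finset.mem_insert_self a s) (ha j hj)
            obtain ⟨huX, huF⟩ := hu
            obtain ⟨hvX, hvF⟩ := hv
            simp only [mem_preimage, mem_Ioo] at huF hvF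
            have hcast : (j : ℝ) + (K : ℝ) ≤ (a : ℝ) := by exact_mod_cast hja
            have h3 : ((j : ℝ) + 1) * η + ε ≤ (a : ℝ) * η - ε := by
              have h4 : ((j : ℝ) + (K : ℝ)) * η ≤ (a : ℝ) * η :=
                mul_le_mul_of_nonneg_right hcast hη.le
              nlinarith
            by_contra hle
            push_neg at hle
            have := hFmono hle
            linarith [huF.2, hvF.1]
          calc E a + ∑ j ∈ s, E j ≤ Wp p h (G a) + Wp p h (⋃ j ∈ s, G j) :=
                add_le_add hEa (ih hsep')
            _ = Wp p h (⋃ j ∈ s, G j) + Wp p h (G a) := add_comm _ _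
            _ ≤ Wp p h ((⋃ j ∈ s, G j) ∪ G a) := Wp_union hord
            _ ≤ Wp p h (⋃ j ∈ insert a s, G j) := Wp_mono (by
                rw [Finset.set_biUnion_insert]
                exact union_subset subset_union_right subset_union_left)
      refine (main _ ?_).trans ?_
      · intro j hj j' hj' hlt
        simp only [Finset.mem_filter] at hj hj'
        have hmod : j % K = j' % K := hj.2.trans hj'.2.symm
        have hdvd : K ∣ (j' - j) := (Nat.modEq_iff_dvd' hlt.le).1 hmod
        have hle : K ≤ j' - j := Nat.le_of_dvd (by omega) hdvd
        omega
      · refine (Wp_mono ?_).trans (Wp_le_varP hp0 h X)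
        exact iUnion₂_subset fun j _ => inter_subset_left
    -- assemble
    calc ∫⁻ x in X, oscK m X h ε x ^ p ∂m
        = ∫⁻ x in ⋃ j : ℕ, C j, oscK m X h ε x ^ p ∂m := by rw [← hcover]
      _ ≤ ∑' j : ℕ, ∫⁻ x in C j, oscK m X h ε x ^ p ∂m := lintegral_iUnion_le _ _
      _ = ∑ j ∈ Finset.range N, ∫⁻ x in C j, oscK m X h ε x ^ p ∂m := by
          refine tsum_eq_sum fun j hj => ?_
          rw [hCempty j (le_of_not_gt fun hc => hj (Finset.mem_range.2 hc))]
          simp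
      _ ≤ ∑ j ∈ Finset.range N, ENNReal.ofReal η * E j :=
          Finset.sum_le_sum fun j _ => hcell j
      _ = ENNReal.ofReal η * ∑ j ∈ Finset.range N, E j := by rw [Finset.mul_sum]
      _ = ENNReal.ofReal η * ∑ r ∈ Finset.range K,
            ∑ j ∈ (Finset.range N).filter (fun j => j % K = r), E j := by
          rw [Finset.sum_fiberwise_of_maps_to (fun j _ => Finset.mem_range.2 (Nat.mod_lt j hK0))]
      _ ≤ ENNReal.ofReal η * ∑ _r ∈ Finset.range K, V :=
          mul_le_mul_right (Finset.sum_le_sum fun r _ => hfiber r) _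
      _ = ENNReal.ofReal η * ((K : ℝ≥0∞) * V) := by
          rw [Finset.sum_const, Finset.card_range, nsmul_eq_mul]
      _ ≤ ENNReal.ofReal (2 * ε + 2 * η) * V := by
          rw [← mul_assoc]
          refine mul_le_mul_left ?_ V
          have he : ENNReal.ofReal η * (K : ℝ≥0∞) = ENNReal.ofReal (η * (K : ℝ)) := by
            rw [ENNReal.ofReal_mul hη.le, ENNReal.ofReal_natCast]
          rw [he]
          exact ENNReal.ofReal_le_ofReal (by nlinarith)
  -- conclude
  rcases eq_or_ne V ⊤ with hVtop | hVfin
  · rw [hVtop, ENNReal.mul_top (by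
      simp only [ne_eq, ENNReal.ofReal_eq_zero, not_le]
      linarith)]
    exact le_top
  refine ENNReal.le_of_forall_pos_le_add fun δ hδ _ => ?_
  have hδ' : (0 : ℝ) < (δ : ℝ) := hδ
  set η : ℝ := (δ : ℝ) / (2 * (V.toReal + 1)) with hηdef
  have hT0 : 0 ≤ V.toReal := ENNReal.toReal_nonneg
  have hηpos : 0 < η := by positivity
  refine (key η hηpos).trans ?_
  rw [ENNReal.ofReal_add (by linarith) (by linarith), add_mul]
  refine add_le_add le_rfl ?_
  calc ENNReal.ofReal (2 * η) * V = ENNReal.ofReal (2 * η) * ENNReal.ofReal V.toReal := by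
        rw [ENNReal.ofReal_toReal hVfin]
    _ = ENNReal.ofReal (2 * η * V.toReal) := (ENNReal.ofReal_mul (by linarith)).symm
    _ ≤ ENNReal.ofReal (δ : ℝ) := ENNReal.ofReal_le_ofReal (by
        have h2 : η * (2 * (V.toReal + 1)) = (δ : ℝ) := div_mul_cancel₀ _ (by positivity)
        nlinarith)
    _ = (δ : ℝ≥0∞) := ENNReal.ofReal_coe_nnreal
end
end

section
/- Fix A > 0, let X be a compact subset of ℝ, let m be an atom-free Borel probability measure on X, and let α ∈ (0,1]. Let C* > 0 be a constant such that ‖h‖_{L^∞(m)} ≤ C* ‖h‖_{α,1} for every h in H^{α,1}(m). Then for all h and g in the Keller space H^{α,1}(m), the product h·g belongs to H^{α,1}(m) and ‖h·g‖_{α,1} ≤ 2 C* ‖h‖_{α,1} · ‖g‖_{α,1}. -/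
open MeasureTheory Filter Set Topology ENNReal NNReal

noncomputable section

section Statement17Aux

lemma pdist_symm (m : Measure ℝ) (X : Set ℝ) (x y : ℝ) : pdist m X x y = pdist m X y x := by
  unfold pdist
  congr 1
  ext z
  exact and_congr_right fun _ => or_comm

lemma pdist_triangle (m : Measure ℝ) (X : Set ℝ) (x y z : ℝ) :
    pdist m X x z ≤ pdist m X x y + pdist m X y z := by
  refine le_trans (measure_mono ?_) (measure_union_le _ _)
  rintro w ⟨hw, hord⟩
  rcases le_total w y with hwy | hyw
  · rcases hord with ⟨h1, _⟩ | ⟨h1, _⟩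
    · exact Or.inl ⟨hw, Or.inl ⟨h1, hwy⟩⟩
    · exact Or.inr ⟨hw, Or.inr ⟨h1, hwy⟩⟩
  · rcases hord with ⟨_, h2⟩ | ⟨_, h2⟩
    · exact Or.inr ⟨hw, Or.inl ⟨hyw, h2⟩⟩
    · exact Or.inl ⟨hw, Or.inr ⟨hyw, h2⟩⟩

lemma eventually_pdist_lt (m : Measure ℝ) [IsFiniteMeasure m] (X : Set ℝ)
    (hatom : ∀ x : ℝ, m {x} = 0) (x : ℝ) {c : ℝ≥0∞} (hc : 0 < c) :
    ∀ᶠ y in 𝓝 x, pdist m X x y < c := by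
  have hInt : (⋂ n : ℕ, Icc (x - 1/(n+1)) (x + 1/(n+1))) = {x} := by
    ext z
    simp only [mem_iInter, mem_Icc, mem_singleton_iff]
    constructor
    · intro hz
      by_contra hne
      have habs : 0 < |z - x| := abs_pos.mpr (sub_ne_zero.mpr hne)
      obtain ⟨n, hn⟩ := exists_nat_one_div_lt habs
      have h1 := (hz n).1
      have h2 := (hz n).2
      have : |z - x| ≤ 1/(n+1:ℝ) := abs_sub_le_iff.mpr ⟨by linarith, by linarith⟩
      linarith
    · rintro rfl n
      have : (0:ℝ) < 1/(n+1) := by positivity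
      constructor <;> linarith
  have hmono : Antitone (fun n : ℕ => Icc (x - 1/(n+1:ℝ)) (x + 1/(n+1:ℝ))) := by
    intro a b hab
    have hx1 : (1:ℝ)/(b+1) ≤ 1/(a+1) := by
      apply one_div_le_one_div_of_le
      · positivity
      · exact_mod_cast Nat.succ_le_succ hab
    exact Icc_subset_Icc (by linarith) (by linarith)
  have htend := tendsto_measure_iInter_atTop (μ := m)
    (fun n : ℕ => measurableSet_Icc.nullMeasurableSet) hmono ⟨0, measure_ne_top m _⟩
  rw [hInt, hatom x] at htend
  obtain ⟨n, hn⟩ := (htend.eventually_lt_const hc).exists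
  simp only [Function.comp] at hn
  filter_upwards [Metric.ball_mem_nhds x (show (0:ℝ) < 1/(n+1) by positivity)] with y hy
  refine lt_of_le_of_lt (measure_mono ?_) hn
  rintro z ⟨_, hord⟩
  have hy' := abs_sub_lt_iff.mp (by rwa [Metric.mem_ball, Real.dist_eq] at hy)
  simp only [mem_Icc]
  rcases hord with ⟨h1, h2⟩ | ⟨h1, h2⟩ <;>
    exact ⟨by linarith [hy'.1, hy'.2], by linarith [hy'.1, hy'.2]⟩

lemma isOpen_pdist_lt (m : Measure ℝ) [IsFiniteMeasure m] (X : Set ℝ)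
    (hatom : ∀ x : ℝ, m {x} = 0) (x : ℝ) (c : ℝ≥0∞) :
    IsOpen {y : ℝ | pdist m X x y < c} := by
  rw [isOpen_iff_mem_nhds]
  intro y hy
  obtain ⟨r, h1, h2⟩ := exists_between (show pdist m X x y < c from hy)
  have h0 : (0:ℝ≥0∞) < r - pdist m X x y := tsub_pos_iff_lt.mpr h1
  filter_upwards [eventually_pdist_lt m X hatom y h0] with y' hy'
  have : pdist m X x y' < r := by
    calc pdist m X x y' ≤ pdist m X x y + pdist m X y y' := pdist_triangle m X x y y'
      _ < pdist m X x y + (r - pdist m X x y) :=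
        ENNReal.add_lt_add_left (measure_ne_top m _) hy'
      _ = r := add_tsub_cancel_of_le h1.le
  exact this.trans h2

lemma measurableSet_dBall (m : Measure ℝ) [IsFiniteMeasure m] {X : Set ℝ}
    (hXm : MeasurableSet X) (hatom : ∀ x : ℝ, m {x} = 0) (x : ℝ) (ε : ℝ) :
    MeasurableSet (dBall m X x ε) := by
  have : dBall m X x ε = X ∩ {y : ℝ | pdist m X x y < ENNReal.ofReal ε} := rfl
  rw [this]
  exact hXm.inter (isOpen_pdist_lt m X hatom x _).measurableSet

lemma dBall_mono (m : Measure ℝ) (X : Set ℝ) (x : ℝ) {ε ε' : ℝ} (hεε : ε ≤ ε') :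
    dBall m X x ε ⊆ dBall m X x ε' :=
  fun y hy => ⟨hy.1, lt_of_lt_of_le hy.2 (ENNReal.ofReal_le_ofReal hεε)⟩

lemma lowerSemicontinuous_oscK (m : Measure ℝ) [IsProbabilityMeasure m] {X : Set ℝ}
    (hXm : MeasurableSet X) (hatom : ∀ x : ℝ, m {x} = 0) (h : ℝ → ℂ) (ε : ℝ) :
    LowerSemicontinuous fun x => oscK m X h ε x := by
  intro x c hc
  obtain ⟨c', hcc', hc'x⟩ := exists_between hc
  have hBmeas : ∀ (u : ℝ) (δ : ℝ), MeasurableSet (dBall m X u δ ×ˢ dBall m X u δ) :=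
    fun u δ => (measurableSet_dBall m hXm hatom u δ).prod (measurableSet_dBall m hXm hatom u δ)
  -- positivity of the bad set
  have hpos : 0 < (m.prod m) ({p : ℝ × ℝ | c' < ENNReal.ofReal ‖h p.1 - h p.2‖} ∩
      dBall m X x ε ×ˢ dBall m X x ε) := by
    rcases eq_zero_or_pos ((m.prod m) ({p : ℝ × ℝ | c' < ENNReal.ofReal ‖h p.1 - h p.2‖} ∩
        dBall m X x ε ×ˢ dBall m X x ε)) with h0 | h0
    · exfalso
      have hle : oscK m X h ε x ≤ c' := by
        refine essSup_le_of_ae_le c' (ae_iff.mpr ?_)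
        rw [Measure.restrict_apply' (hBmeas x ε)]
        have hset : {p : ℝ × ℝ | ¬ (ENNReal.ofReal ‖h p.1 - h p.2‖ ≤ c')} =
            {p : ℝ × ℝ | c' < ENNReal.ofReal ‖h p.1 - h p.2‖} := by
          ext p; simp [not_le]
        rw [hset]
        exact h0
      exact absurd hc'x (not_lt.mpr hle)
    · exact h0
  -- increasing family of smaller balls
  set T : ℕ → Set (ℝ × ℝ) := fun n =>
    {p : ℝ × ℝ | c' < ENNReal.ofReal ‖h p.1 - h p.2‖} ∩
      dBall m X x (ε - 1/(n+1)) ×ˢ dBall m X x (ε - 1/(n+1)) with hTdef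
  have hTmono : Monotone T := by
    intro a b hab
    apply inter_subset_inter_right
    have hx1 : (1:ℝ)/(b+1) ≤ 1/(a+1) := by
      apply one_div_le_one_div_of_le
      · positivity
      · exact_mod_cast Nat.succ_le_succ hab
    exact Set.prod_mono (dBall_mono m X x (by linarith)) (dBall_mono m X x (by linarith))
  have hUnion : {p : ℝ × ℝ | c' < ENNReal.ofReal ‖h p.1 - h p.2‖} ∩
      dBall m X x ε ×ˢ dBall m X x ε ⊆ ⋃ n, T n := by
    rintro ⟨y, y'⟩ ⟨hFp, hy, hy'⟩
    have h1 : (pdist m X x y).toReal < ε :=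
      (ENNReal.lt_ofReal_iff_toReal_lt (measure_ne_top m _)).mp hy.2
    have h2 : (pdist m X x y').toReal < ε :=
      (ENNReal.lt_ofReal_iff_toReal_lt (measure_ne_top m _)).mp hy'.2
    obtain ⟨n, hn⟩ := exists_nat_one_div_lt
      (show 0 < ε - max (pdist m X x y).toReal (pdist m X x y').toReal from
        sub_pos.mpr (max_lt h1 h2))
    refine mem_iUnion.mpr ⟨n, hFp, ⟨hy.1, ?_⟩, ⟨hy'.1, ?_⟩⟩
    · refine (ENNReal.lt_ofReal_iff_toReal_lt (measure_ne_top m _)).mpr ?_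
      show (pdist m X x y).toReal < ε - 1/(n+1:ℝ)
      have := le_max_left (pdist m X x y).toReal (pdist m X x y').toReal
      linarith
    · refine (ENNReal.lt_ofReal_iff_toReal_lt (measure_ne_top m _)).mpr ?_
      show (pdist m X x y').toReal < ε - 1/(n+1:ℝ)
      have := le_max_right (pdist m X x y).toReal (pdist m X x y').toReal
      linarith
  have hU : (m.prod m) (⋃ n, T n) = ⨆ n, (m.prod m) (T n) :=
    (hTmono.directed_le).measure_iUnion
  obtain ⟨n, hn⟩ := lt_iSup_iff.mp
    (show (0:ℝ≥0∞) < ⨆ n, (m.prod m) (T n) by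
      rw [← hU]; exact lt_of_lt_of_le hpos (measure_mono hUnion))
  have hδpos : (0:ℝ) < 1/(n+1) := by positivity
  obtain ⟨p, hp⟩ := nonempty_of_measure_ne_zero hn.ne'
  have hεδ : 0 < ε - 1/(n+1:ℝ) := by
    by_contra hle
    push_neg at hle
    have hpd := hp.2.1.2
    rw [ENNReal.ofReal_eq_zero.mpr (by linarith)] at hpd
    exact absurd hpd (by simp)
  filter_upwards [eventually_pdist_lt m X hatom x
    (show (0:ℝ≥0∞) < ENNReal.ofReal (1/(n+1)) from ENNReal.ofReal_pos.mpr hδpos)] with x' hx'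
  -- show c < oscK m X h ε x'
  have hsub : dBall m X x (ε - 1/(n+1)) ⊆ dBall m X x' ε := by
    intro y hy
    refine ⟨hy.1, ?_⟩
    have hx'' : pdist m X x' x < ENNReal.ofReal (1/(n+1)) := by
      rw [pdist_symm]; exact hx'
    calc pdist m X x' y ≤ pdist m X x' x + pdist m X x y := pdist_triangle m X x' x y
      _ < ENNReal.ofReal (1/(n+1)) + ENNReal.ofReal (ε - 1/(n+1)) :=
        ENNReal.add_lt_add hx'' hy.2
      _ = ENNReal.ofReal ε := by
        rw [← ENNReal.ofReal_add hδpos.le hεδ.le]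
        ring_nf
  refine lt_of_lt_of_le hcc' ?_
  by_contra hlt
  push_neg at hlt
  have hae := ae_le_essSup
    (μ := (m.prod m).restrict (dBall m X x' ε ×ˢ dBall m X x' ε))
    (fun p : ℝ × ℝ => ENNReal.ofReal ‖h p.1 - h p.2‖)
  have hosc' : essSup (fun p : ℝ × ℝ => ENNReal.ofReal ‖h p.1 - h p.2‖)
      ((m.prod m).restrict (dBall m X x' ε ×ˢ dBall m X x' ε)) = oscK m X h ε x' := rfl
  have hnull : (m.prod m).restrict (dBall m X x' ε ×ˢ dBall m X x' ε)
      {p : ℝ × ℝ | c' < ENNReal.ofReal ‖h p.1 - h p.2‖} = 0 := by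
    have hng : ∀ᵐ p ∂((m.prod m).restrict (dBall m X x' ε ×ˢ dBall m X x' ε)),
        ¬ (c' < ENNReal.ofReal ‖h p.1 - h p.2‖) := by
      filter_upwards [hae] with p hpae
      exact not_lt.mpr (hpae.trans (by rw [hosc']; exact hlt.le))
    simpa [not_not] using ae_iff.mp hng
  rw [Measure.restrict_apply' (hBmeas x' ε)] at hnull
  have hTn0 : (m.prod m) (T n) = 0 := by
    refine measure_mono_null ?_ hnull
    rintro q ⟨hq1, hq2⟩
    exact ⟨hq1, hsub hq2.1, hsub hq2.2⟩
  exact absurd hTn0 hn.ne'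

lemma ae_fst_le (m : Measure ℝ) [IsProbabilityMeasure m] {X : Set ℝ}
    (hXm : MeasurableSet X) (hatom : ∀ x : ℝ, m {x} = 0) (φ : ℝ → ℂ) (x : ℝ) (ε : ℝ) :
    ∀ᵐ p ∂((m.prod m).restrict (dBall m X x ε ×ˢ dBall m X x ε)),
      ENNReal.ofReal ‖φ p.1‖ ≤ essSup (fun y => ENNReal.ofReal ‖φ y‖) (m.restrict X) := by
  set M := essSup (fun y => ENNReal.ofReal ‖φ y‖) (m.restrict X) with hM
  have h1 : (m.restrict X) {y : ℝ | ¬ ENNReal.ofReal ‖φ y‖ ≤ M} = 0 :=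
    ae_iff.mp (ae_le_essSup (fun y => ENNReal.ofReal ‖φ y‖))
  have hN0 : m (toMeasurable (m.restrict X) {y : ℝ | ¬ ENNReal.ofReal ‖φ y‖ ≤ M} ∩ X) = 0 := by
    rw [← Measure.restrict_apply' hXm, measure_toMeasurable]
    exact h1
  rw [ae_iff]
  refine measure_mono_null
    (t := {p : ℝ × ℝ | p.1 ∈ toMeasurable (m.restrict X) {y : ℝ | ¬ ENNReal.ofReal ‖φ y‖ ≤ M}})
    (fun p hp => subset_toMeasurable _ _ hp) ?_
  have hBm : MeasurableSet (dBall m X x ε ×ˢ dBall m X x ε) :=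
    (measurableSet_dBall m hXm hatom x ε).prod (measurableSet_dBall m hXm hatom x ε)
  rw [Measure.restrict_apply' hBm]
  refine measure_mono_null
    (t := (toMeasurable (m.restrict X) {y : ℝ | ¬ ENNReal.ofReal ‖φ y‖ ≤ M} ∩ X) ×ˢ
      (univ : Set ℝ)) ?_ ?_
  · rintro ⟨y, y'⟩ ⟨hN1, hB1, _⟩
    exact ⟨⟨hN1, hB1.1⟩, trivial⟩
  · rw [Measure.prod_prod, hN0, zero_mul]

lemma ae_snd_le (m : Measure ℝ) [IsProbabilityMeasure m] {X : Set ℝ}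
    (hXm : MeasurableSet X) (hatom : ∀ x : ℝ, m {x} = 0) (φ : ℝ → ℂ) (x : ℝ) (ε : ℝ) :
    ∀ᵐ p ∂((m.prod m).restrict (dBall m X x ε ×ˢ dBall m X x ε)),
      ENNReal.ofReal ‖φ p.2‖ ≤ essSup (fun y => ENNReal.ofReal ‖φ y‖) (m.restrict X) := by
  set M := essSup (fun y => ENNReal.ofReal ‖φ y‖) (m.restrict X) with hM
  have h1 : (m.restrict X) {y : ℝ | ¬ ENNReal.ofReal ‖φ y‖ ≤ M} = 0 :=
    ae_iff.mp (ae_le_essSup (fun y => ENNReal.ofReal ‖φ y‖))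
  have hN0 : m (toMeasurable (m.restrict X) {y : ℝ | ¬ ENNReal.ofReal ‖φ y‖ ≤ M} ∩ X) = 0 := by
    rw [← Measure.restrict_apply' hXm, measure_toMeasurable]
    exact h1
  rw [ae_iff]
  refine measure_mono_null
    (t := {p : ℝ × ℝ | p.2 ∈ toMeasurable (m.restrict X) {y : ℝ | ¬ ENNReal.ofReal ‖φ y‖ ≤ M}})
    (fun p hp => subset_toMeasurable _ _ hp) ?_
  have hBm : MeasurableSet (dBall m X x ε ×ˢ dBall m X x ε) :=
    (measurableSet_dBall m hXm hatom x ε).prod (measurableSet_dBall m hXm hatom x ε)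
  rw [Measure.restrict_apply' hBm]
  refine measure_mono_null
    (t := (univ : Set ℝ) ×ˢ
      (toMeasurable (m.restrict X) {y : ℝ | ¬ ENNReal.ofReal ‖φ y‖ ≤ M} ∩ X)) ?_ ?_
  · rintro ⟨y, y'⟩ ⟨hN1, _, hB2⟩
    exact ⟨trivial, ⟨hN1, hB2.1⟩⟩
  · rw [Measure.prod_prod, hN0, mul_zero]

end Statement17Aux

/-- the Keller space is a Banach algebra (product estimate). -/
theorem statement17 (A : ℝ) (hA : 0 < A) (X : Set ℝ) (hX : IsCompact X)
    (m : Measure ℝ) [IsProbabilityMeasure m] (hmX : m X = 1) (hatom : ∀ x, m {x} = 0)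
    (α : ℝ) (hα : α ∈ Ioc (0:ℝ) 1)
    (Cstar : ℝ) (hCstar : 0 < Cstar)
    (hCs : ∀ h : ℝ → ℂ, MemKeller A α m X h →
      essSup (fun x => ENNReal.ofReal ‖h x‖) (m.restrict X) ≤
        ENNReal.ofReal Cstar * kellerNorm A α m X h)
    (h g : ℝ → ℂ) (hh : MemKeller A α m X h) (hg : MemKeller A α m X g) :
    MemKeller A α m X (fun x => h x * g x) ∧
      kellerNorm A α m X (fun x => h x * g x) ≤
        ENNReal.ofReal (2 * Cstar) *
          (kellerNorm A α m X h * kellerNorm A α m X g) := by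
  have hXm : MeasurableSet X := hX.isClosed.measurableSet
  set Mh := essSup (fun x => ENNReal.ofReal ‖h x‖) (m.restrict X) with hMh
  set Mg := essSup (fun x => ENNReal.ofReal ‖g x‖) (m.restrict X) with hMg
  have hMhK : Mh ≤ ENNReal.ofReal Cstar * kellerNorm A α m X h := hCs h hh
  have hMgK : Mg ≤ ENNReal.ofReal Cstar * kellerNorm A α m X g := hCs g hg
  have hKh_ne : kellerNorm A α m X h ≠ ⊤ := hh
  have hKg_ne : kellerNorm A α m X g ≠ ⊤ := hg
  have hMh_ne : Mh ≠ ⊤ :=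
    ne_top_of_le_ne_top (ENNReal.mul_ne_top ENNReal.ofReal_ne_top hKh_ne) hMhK
  have hMg_ne : Mg ≠ ⊤ :=
    ne_top_of_le_ne_top (ENNReal.mul_ne_top ENNReal.ofReal_ne_top hKg_ne) hMgK
  -- pointwise oscillation bound
  have hosc : ∀ (ε : ℝ) (x : ℝ), oscK m X (fun y => h y * g y) ε x ≤
      Mh * oscK m X g ε x + Mg * oscK m X h ε x := by
    intro ε x
    have hOg : essSup (fun p : ℝ × ℝ => ENNReal.ofReal ‖g p.1 - g p.2‖)
        ((m.prod m).restrict (dBall m X x ε ×ˢ dBall m X x ε)) = oscK m X g ε x := rfl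
    have hOh : essSup (fun p : ℝ × ℝ => ENNReal.ofReal ‖h p.1 - h p.2‖)
        ((m.prod m).restrict (dBall m X x ε ×ˢ dBall m X x ε)) = oscK m X h ε x := rfl
    refine essSup_le_of_ae_le _ ?_
    filter_upwards [ae_fst_le m hXm hatom h x ε, ae_snd_le m hXm hatom g x ε,
      ae_le_essSup (μ := (m.prod m).restrict (dBall m X x ε ×ˢ dBall m X x ε))
        (fun p : ℝ × ℝ => ENNReal.ofReal ‖g p.1 - g p.2‖),
      ae_le_essSup (μ := (m.prod m).restrict (dBall m X x ε ×ˢ dBall m X x ε))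
        (fun p : ℝ × ℝ => ENNReal.ofReal ‖h p.1 - h p.2‖)] with p h1 h2 h3 h4
    rw [hOg] at h3
    rw [hOh] at h4
    calc ENNReal.ofReal ‖h p.1 * g p.1 - h p.2 * g p.2‖
        ≤ ENNReal.ofReal (‖h p.1‖ * ‖g p.1 - g p.2‖ + ‖g p.2‖ * ‖h p.1 - h p.2‖) := by
          apply ENNReal.ofReal_le_ofReal
          calc ‖h p.1 * g p.1 - h p.2 * g p.2‖
              = ‖h p.1 * (g p.1 - g p.2) + (h p.1 - h p.2) * g p.2‖ := by
                congr 1; ring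
            _ ≤ ‖h p.1 * (g p.1 - g p.2)‖ + ‖(h p.1 - h p.2) * g p.2‖ := norm_add_le _ _
            _ = ‖h p.1‖ * ‖g p.1 - g p.2‖ + ‖g p.2‖ * ‖h p.1 - h p.2‖ := by
                rw [norm_mul, norm_mul]; ring
      _ = ENNReal.ofReal ‖h p.1‖ * ENNReal.ofReal ‖g p.1 - g p.2‖ +
          ENNReal.ofReal ‖g p.2‖ * ENNReal.ofReal ‖h p.1 - h p.2‖ := by
          rw [ENNReal.ofReal_add (by positivity) (by positivity),
            ENNReal.ofReal_mul (norm_nonneg _), ENNReal.ofReal_mul (norm_nonneg _)]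
      _ ≤ Mh * oscK m X g ε x + Mg * oscK m X h ε x :=
          add_le_add (mul_le_mul' h1 h3) (mul_le_mul' h2 h4)
  -- integrated oscillation bound
  have hOgmeas : ∀ ε : ℝ, Measurable (fun x => oscK m X g ε x) := fun ε =>
    (lowerSemicontinuous_oscK m hXm hatom g ε).measurable
  have hosc1 : ∀ ε : ℝ, osc1K m X (fun y => h y * g y) ε ≤
      Mh * osc1K m X g ε + Mg * osc1K m X h ε := by
    intro ε
    calc osc1K m X (fun y => h y * g y) ε
        ≤ ∫⁻ x in X, (Mh * oscK m X g ε x + Mg * oscK m X h ε x) ∂m :=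
          lintegral_mono (fun x => hosc ε x)
      _ = (∫⁻ x in X, Mh * oscK m X g ε x ∂m) + ∫⁻ x in X, Mg * oscK m X h ε x ∂m :=
          lintegral_add_left' (((hOgmeas ε).const_mul Mh).aemeasurable) _
      _ = Mh * osc1K m X g ε + Mg * osc1K m X h ε := by
          rw [lintegral_const_mul' Mh _ hMh_ne, lintegral_const_mul' Mg _ hMg_ne]
          rfl
  -- seminorm bound
  have hsemi : kellerSemi A α m X (fun y => h y * g y) ≤
      Mh * kellerSemi A α m X g + Mg * kellerSemi A α m X h := by
    unfold kellerSemi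
    refine iSup₂_le fun ε hε => ?_
    calc osc1K m X (fun y => h y * g y) ε / ENNReal.ofReal (ε ^ α)
        ≤ (Mh * osc1K m X g ε + Mg * osc1K m X h ε) / ENNReal.ofReal (ε ^ α) :=
          ENNReal.div_le_div_right (hosc1 ε) _
      _ = Mh * (osc1K m X g ε / ENNReal.ofReal (ε ^ α)) +
          Mg * (osc1K m X h ε / ENNReal.ofReal (ε ^ α)) := by
          rw [ENNReal.add_div, mul_div_assoc, mul_div_assoc]
      _ ≤ Mh * (⨆ ε' ∈ Ioc (0:ℝ) A, osc1K m X g ε' / ENNReal.ofReal (ε' ^ α)) +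
          Mg * (⨆ ε' ∈ Ioc (0:ℝ) A, osc1K m X h ε' / ENNReal.ofReal (ε' ^ α)) := by
          gcongr
          · exact le_iSup₂ (f := fun ε' (_ : ε' ∈ Ioc (0:ℝ) A) =>
              osc1K m X g ε' / ENNReal.ofReal (ε' ^ α)) ε hε
          · exact le_iSup₂ (f := fun ε' (_ : ε' ∈ Ioc (0:ℝ) A) =>
              osc1K m X h ε' / ENNReal.ofReal (ε' ^ α)) ε hε
  -- L¹ bound
  have hL1 : (∫⁻ x in X, ENNReal.ofReal ‖h x * g x‖ ∂m) ≤
      Mh * ∫⁻ x in X, ENNReal.ofReal ‖g x‖ ∂m := by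
    rw [← lintegral_const_mul' Mh _ hMh_ne]
    refine lintegral_mono_ae ?_
    filter_upwards [ae_le_essSup (μ := m.restrict X) (fun y => ENNReal.ofReal ‖h y‖)] with x hx
    calc ENNReal.ofReal ‖h x * g x‖
        = ENNReal.ofReal ‖h x‖ * ENNReal.ofReal ‖g x‖ := by
          rw [norm_mul, ENNReal.ofReal_mul (norm_nonneg _)]
      _ ≤ Mh * ENNReal.ofReal ‖g x‖ := mul_le_mul_left hx _
  -- assemble
  have hsemih_le : kellerSemi A α m X h ≤ kellerNorm A α m X h := le_add_self
  have main : kellerNorm A α m X (fun x => h x * g x) ≤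
      ENNReal.ofReal (2 * Cstar) * (kellerNorm A α m X h * kellerNorm A α m X g) := by
    calc kellerNorm A α m X (fun x => h x * g x)
        = (∫⁻ x in X, ENNReal.ofReal ‖h x * g x‖ ∂m) +
          kellerSemi A α m X (fun x => h x * g x) := rfl
      _ ≤ (Mh * ∫⁻ x in X, ENNReal.ofReal ‖g x‖ ∂m) +
          (Mh * kellerSemi A α m X g + Mg * kellerSemi A α m X h) := add_le_add hL1 hsemi
      _ = Mh * ((∫⁻ x in X, ENNReal.ofReal ‖g x‖ ∂m) + kellerSemi A α m X g) +
          Mg * kellerSemi A α m X h := by ring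
      _ = Mh * kellerNorm A α m X g + Mg * kellerSemi A α m X h := rfl
      _ ≤ Mh * kellerNorm A α m X g + Mg * kellerNorm A α m X h := by gcongr
      _ ≤ (ENNReal.ofReal Cstar * kellerNorm A α m X h) * kellerNorm A α m X g +
          (ENNReal.ofReal Cstar * kellerNorm A α m X g) * kellerNorm A α m X h :=
          add_le_add (mul_le_mul_left hMhK _) (mul_le_mul_left hMgK _)
      _ = ENNReal.ofReal (2 * Cstar) * (kellerNorm A α m X h * kellerNorm A α m X g) := by
          rw [ENNReal.ofReal_mul (by norm_num : (0:ℝ) ≤ 2), ENNReal.ofReal_ofNat]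
          ring
  refine ⟨?_, main⟩
  exact ne_top_of_le_ne_top
    (ENNReal.mul_ne_top ENNReal.ofReal_ne_top (ENNReal.mul_ne_top hKh_ne hKg_ne)) main
end
end
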